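/- arXiv:2308.10703 — 9 statements merged into one kernel-verified Lean document; each statement's English description precedes it below -/
import Mathlib

section
/- Let V be a real Hilbert space, let M ≥ 1 and α > 0, and let A : V → V be a continuous linear operator satisfying ‖A v‖ ≤ M‖v‖ and ⟨A v, v⟩ ≥ α‖v‖² for all v ∈ V. Then for all v, w ∈ V one has ‖w + A v‖² ≥ 2α⟨w, v⟩ + (1/3)(α/M)³ (‖w‖² + ‖v‖²). -/
open scoped RealInnerProductSpace

set_option maxHeartbeats 800000 in
/-- Lemma 4.3: for an `M`-continuous, `α`-coercive operator `A` on a real Hilbert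
space `V`, `‖w + A v‖² ≥ 2α⟨w,v⟩ + (1/3)(α/M)³(‖w‖² + ‖v‖²)`. -/
theorem stmt0 {V : Type*} [NormedAddCommGroup V] [InnerProductSpace ℝ V] [CompleteSpace V]
    (M α : ℝ) (hM : 1 ≤ M) (hα : 0 < α) (A : V →L[ℝ] V)
    (hAM : ∀ v : V, ‖A v‖ ≤ M * ‖v‖) (hAα : ∀ v : V, α * ‖v‖ ^ 2 ≤ ⟪A v, v⟫)
    (v w : V) :
    2 * α * ⟪w, v⟫ + (1 / 3) * (α / M) ^ 3 * (‖w‖ ^ 2 + ‖v‖ ^ 2) ≤ ‖w + A v‖ ^ 2 := by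
  have hM0 : (0:ℝ) < M := lt_of_lt_of_le one_pos hM
  by_cases hvw : v = 0 ∧ w = 0
  · obtain ⟨hv, hw⟩ := hvw
    subst hv; subst hw
    simp
  · -- first derive α ≤ M from a nonzero vector
    have hαM : α ≤ M := by
      obtain ⟨u, hu⟩ : ∃ u : V, u ≠ 0 := by
        rcases not_and_or.mp hvw with h | h
        exacts [⟨v, h⟩, ⟨w, h⟩]
      have h1 := hAα u
      have h2 : ⟪A u, u⟫ ≤ ‖A u‖ * ‖u‖ := real_inner_le_norm _ _
      have h3 := hAM u
      have hu' : 0 < ‖u‖ := norm_pos_iff.mpr hu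
      nlinarith [mul_pos hu' hu']
    set c : ℝ := (1 / 3) * (α / M) ^ 3 with hcdef
    have hc0 : 0 < c := by positivity
    have hc1 : c ≤ 1 / 3 := by
      have hd : α / M ≤ 1 := (div_le_one hM0).mpr hαM
      have hd0 : 0 < α / M := div_pos hα hM0
      have h3 : (α / M) ^ 3 ≤ 1 := pow_le_one₀ hd0.le hd
      rw [hcdef]; linarith
    have hcb : c * (M ^ 2 + 1) ≤ 2 / 3 * α ^ 2 := by
      have hc : c * (3 * M ^ 3) = α ^ 3 := by
        rw [hcdef]; field_simp
      have h1 : α ^ 3 * (M ^ 2 + 1) ≤ 2 * α ^ 2 * M ^ 3 := by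
        have hMM : M ≤ M ^ 3 := by
          nlinarith [mul_nonneg (mul_pos hM0 hM0).le (sub_nonneg.mpr hM),
            mul_nonneg hM0.le (sub_nonneg.mpr hM)]
        have ha1 : α ^ 3 * M ^ 2 ≤ α ^ 2 * M ^ 3 := by
          nlinarith [mul_nonneg (mul_nonneg (mul_pos hα hα).le (mul_pos hM0 hM0).le)
            (sub_nonneg.mpr hαM)]
        have ha2 : α ^ 3 ≤ α ^ 2 * M ^ 3 := by
          nlinarith [mul_nonneg (mul_pos hα hα).le
            (by linarith : (0:ℝ) ≤ M ^ 3 - α)]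
        linarith
      have hM3 : (0:ℝ) < 3 * M ^ 3 := by positivity
      rw [← mul_le_mul_iff_of_pos_right hM3]
      calc c * (M ^ 2 + 1) * (3 * M ^ 3) = (c * (3 * M ^ 3)) * (M ^ 2 + 1) := by ring
        _ = α ^ 3 * (M ^ 2 + 1) := by rw [hc]
        _ ≤ 2 * α ^ 2 * M ^ 3 := h1
        _ = 2 / 3 * α ^ 2 * (3 * M ^ 3) := by ring
    have ha0 : (0:ℝ) ≤ ‖w‖ := norm_nonneg _
    have hr0 : (0:ℝ) ≤ ‖v‖ := norm_nonneg _
    have hb0 : (0:ℝ) ≤ ‖A v - α • v‖ := norm_nonneg _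
    have ht : ‖A v‖ ≤ M * ‖v‖ := hAM v
    have ht2 : ‖A v‖ ^ 2 ≤ M ^ 2 * ‖v‖ ^ 2 := by
      nlinarith [norm_nonneg (A v), mul_nonneg hM0.le hr0]
    have hb2 : ‖A v - α • v‖ ^ 2 ≤ ‖A v‖ ^ 2 - α ^ 2 * ‖v‖ ^ 2 := by
      have h := norm_sub_sq_real (A v) (α • v)
      have h2 : ⟪A v, α • v⟫ = α * ⟪A v, v⟫ := real_inner_smul_right _ _ _
      have h3 : ‖α • v‖ = α * ‖v‖ := by
        rw [norm_smul, Real.norm_eq_abs, abs_of_pos hα]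
      have h4 := hAα v
      rw [h2, h3] at h
      nlinarith
    have hexp : ‖w + A v‖ ^ 2 = ‖w‖ ^ 2 + 2 * ⟪w, A v⟫ + ‖A v‖ ^ 2 :=
      norm_add_sq_real w (A v)
    have hsplit : ⟪w, A v⟫ = α * ⟪w, v⟫ + ⟪w, A v - α • v⟫ := by
      rw [inner_sub_right, real_inner_smul_right]; ring
    have hCS : -(‖w‖ * ‖A v - α • v‖) ≤ ⟪w, A v - α • v⟫ :=
      (abs_le.mp (abs_real_inner_le_norm _ _)).1
    have hstep : 0 ≤ (1 - c) * (‖A v‖ ^ 2 - c * ‖v‖ ^ 2) - ‖A v - α • v‖ ^ 2 := by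
      nlinarith [mul_nonneg hc0.le (sub_nonneg.mpr ht2),
        mul_nonneg (by nlinarith [sq_nonneg α] : (0:ℝ) ≤ α ^ 2 - c * (M ^ 2 + 1)) (sq_nonneg ‖v‖),
        sq_nonneg (c * ‖v‖)]
    have hquad : 0 ≤ (1 - c) * ‖w‖ ^ 2 - 2 * ‖w‖ * ‖A v - α • v‖ +
        (‖A v‖ ^ 2 - c * ‖v‖ ^ 2) := by
      have h1c : 0 < 1 - c := by linarith
      nlinarith [sq_nonneg ((1 - c) * ‖w‖ - ‖A v - α • v‖), hstep]
    rw [hexp, hsplit]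
    linarith [hCS, hquad]
end

section
/- Let L be a real Hilbert space and let Φ : L → L be a continuous linear operator with ‖Φ‖ ≤ 1. Let a > 0 and b ∈ [0, a] be real numbers such that γ := a − b‖Φ‖² > 0. Then for all v, w ∈ L one has a‖w‖² − b‖v‖² + (9a²/γ)‖v − Φ w‖² ≥ (γ/3)(‖w‖² + ‖v‖²). -/
private lemma aux_poly (a b N W V d : ℝ) (ha : 0 < a) (hb0 : 0 ≤ b) (hba : b ≤ a) (hN0 : 0 ≤ N)
    (hΦ : N ≤ 1) (hγ : 0 < a - b * N ^ 2) (hW0 : 0 ≤ W) (hd0 : 0 ≤ d)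
    (hV2 : V ^ 2 ≤ (N * W + d) ^ 2) :
    (a - b * N ^ 2) / 3 * (W ^ 2 + V ^ 2) ≤
      a * W ^ 2 - b * V ^ 2 + 9 * a ^ 2 / (a - b * N ^ 2) * d ^ 2 := by
  set γ := a - b * N ^ 2 with hγdef
  set c := 3 * b + γ with hc
  have hγa : γ ≤ a := by nlinarith [mul_nonneg hb0 (sq_nonneg N)]
  have hc0 : 0 < c := by positivity
  have hc4a : c ≤ 4 * a := by simp only [hc]; linarith
  have h1 : γ * c * V ^ 2 ≤ γ * c * (N * W + d) ^ 2 :=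
    mul_le_mul_of_nonneg_left hV2 (by positivity)
  have hcN : c * N ≤ 4 * a := by nlinarith
  have h4 : γ * c * N * (W * d) ≤ 4 * a * γ * (W * d) := by
    have : γ * (c * N) * (W * d) ≤ γ * (4 * a) * (W * d) := by
      apply mul_le_mul_of_nonneg_right _ (mul_nonneg hW0 hd0)
      exact mul_le_mul_of_nonneg_left hcN hγ.le
    linarith [this]
  have h5 : 8 * a * γ * (W * d) ≤ γ ^ 2 * W ^ 2 + 16 * a ^ 2 * d ^ 2 := by
    nlinarith [sq_nonneg (γ * W - 4 * a * d)]
  have h6' : γ * c * d ^ 2 ≤ 4 * a ^ 2 * d ^ 2 := by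
    have h6 : γ * c ≤ 4 * a * a := by
      have := mul_le_mul hγa hc4a hc0.le ha.le
      linarith
    nlinarith [sq_nonneg d]
  have h7 : γ ^ 2 * N ^ 2 * W ^ 2 ≤ γ ^ 2 * W ^ 2 := by
    have hN1 : 0 ≤ 1 - N ^ 2 := by nlinarith
    nlinarith [mul_nonneg (mul_nonneg (sq_nonneg γ) (sq_nonneg W)) hN1]
  have h3 : 3 * γ * a * W ^ 2 - γ ^ 2 * W ^ 2 - γ * c * N ^ 2 * W ^ 2
      = γ ^ 2 * (2 - N ^ 2) * W ^ 2 := by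
    simp only [hc, hγdef]; ring
  have hd2 : 0 ≤ a ^ 2 * d ^ 2 := by positivity
  have key : γ * (γ * (W ^ 2 + V ^ 2)) ≤
      3 * (γ * (a * W ^ 2 - b * V ^ 2)) + 27 * a ^ 2 * d ^ 2 := by
    have hγcV : γ * c * V ^ 2 = 3 * γ * b * V ^ 2 + γ ^ 2 * V ^ 2 := by
      simp only [hc]; ring
    linarith [h1, h4, h5, h6', h7, h3, hd2, hγcV]
  rw [← sub_nonneg] at key ⊢
  have heq : a * W ^ 2 - b * V ^ 2 + 9 * a ^ 2 / γ * d ^ 2 - γ / 3 * (W ^ 2 + V ^ 2) =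
      (3 * (γ * (a * W ^ 2 - b * V ^ 2)) + 27 * a ^ 2 * d ^ 2 -
        γ * (γ * (W ^ 2 + V ^ 2))) / (3 * γ) := by
    field_simp
    ring
  rw [heq]
  exact div_nonneg key (by positivity)

/-- Lemma 4.4: for a linear contraction `Φ` on a real Hilbert space `L`, reals
`a > 0`, `b ∈ [0,a]` with `γ := a - b‖Φ‖² > 0`, one has
`a‖w‖² - b‖v‖² + (9a²/γ)‖v - Φw‖² ≥ (γ/3)(‖w‖² + ‖v‖²)`. -/
theorem stmt1 {L : Type*} [NormedAddCommGroup L] [InnerProductSpace ℝ L] [CompleteSpace L]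
    (Φ : L →L[ℝ] L) (hΦ : ‖Φ‖ ≤ 1) (a b : ℝ) (ha : 0 < a) (hb0 : 0 ≤ b) (hba : b ≤ a)
    (hγ : 0 < a - b * ‖Φ‖ ^ 2) (v w : L) :
    (a - b * ‖Φ‖ ^ 2) / 3 * (‖w‖ ^ 2 + ‖v‖ ^ 2) ≤
      a * ‖w‖ ^ 2 - b * ‖v‖ ^ 2 + 9 * a ^ 2 / (a - b * ‖Φ‖ ^ 2) * ‖v - Φ w‖ ^ 2 := by
  have hV : ‖v‖ ≤ ‖Φ‖ * ‖w‖ + ‖v - Φ w‖ := by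
    calc ‖v‖ = ‖Φ w + (v - Φ w)‖ := by rw [add_sub_cancel]
    _ ≤ ‖Φ w‖ + ‖v - Φ w‖ := norm_add_le _ _
    _ ≤ ‖Φ‖ * ‖w‖ + ‖v - Φ w‖ := by gcongr; exact Φ.le_opNorm w
  have hV2 : ‖v‖ ^ 2 ≤ (‖Φ‖ * ‖w‖ + ‖v - Φ w‖) ^ 2 := by
    have := norm_nonneg v
    nlinarith
  exact aux_poly a b ‖Φ‖ ‖w‖ ‖v‖ ‖v - Φ w‖ ha hb0 hba (norm_nonneg Φ) hΦ hγ (norm_nonneg w)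
    (norm_nonneg _) hV2
end

section
/- For every choice of real numbers M ≥ 1, α > 0, ζ > 0 and δ > 0 there exists β̂ > 0, depending only on α, M, ζ and δ, with the following property. Let V and L be real Hilbert spaces, let A : V → V be a continuous linear operator with ‖A v‖ ≤ M‖v‖ and ⟨A v, v⟩ ≥ α‖v‖² for all v ∈ V, and let Φ : L → L be a continuous linear operator with ‖Φ‖ ≤ 1. Let X̂ be a linear subspace of Ẑ := V × V × L × L, and for i = 1,…,4 let X̂ᵢ be the closure (in the corresponding factor) of the set of i-th components of elements of X̂. Assume that X̂₁ ⊆ X̂₂, and that there exist μ ∈ (0, ζ] and ν ∈ [0, μ] with μ − ν‖Φ‖² ≥ δ such that for all x = (x₁, x₂, x₃, x₄) ∈ X̂ one has ⟨x₁, x₂⟩_V + (α²/(12 M³))(‖x₂‖² + ‖x₁‖²) ≥ μ‖x₄‖² − ν‖x₃‖². Then for all x = (x₁, x₂, x₃, x₄) ∈ X̂, sup{ ⟨x₁ + A x₂, y₁⟩_V + ⟨x₃ − Φ x₄, y₂⟩_L : (y₁, y₂) ∈ X̂₂ × X̂₃ with ‖y₁‖² + ‖y₂‖² = 1 } ≥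 β̂ (‖x₁‖² + ‖x₂‖² + ‖x₃‖² + ‖x₄‖²)^{1/2}. -/
open scoped RealInnerProductSpace


private lemma stmt3_aux1 (M α δ μ ν t a b p q i1 i2 i3 i4 : ℝ)
    (hM : 1 ≤ M) (hα : 0 < α) (hδ : 0 < δ) (hν : 0 ≤ ν)
    (ht1 : t ^ 2 ≤ 1) (hδ' : δ ≤ μ - ν * t ^ 2)
    (h3 : 12 * M ^ 3 * (μ * q ^ 2 - ν * p ^ 2) ≤ 12 * M ^ 3 * i1 + α ^ 2 * (b ^ 2 + a ^ 2))
    (hA2 : α * b ^ 2 ≤ i2) (hA1 : -(M * b * a) ≤ i3) (hPh : i4 ≤ t * q * p) :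
    (6 * α * M - α ^ 2) * a ^ 2 + (6 * α * M ^ 3 - α ^ 2) * b ^ 2
      + 3 * M ^ 3 * δ * p ^ 2 + 9 * M ^ 3 * δ * q ^ 2 ≤
    12 * M ^ 3 * i1 + 12 * α * M * a ^ 2 + 12 * M ^ 3 * i2 + 12 * α * M * i3
      + (24 * M ^ 3 * ν + 6 * M ^ 3 * δ) * p ^ 2 - (24 * M ^ 3 * ν + 6 * M ^ 3 * δ) * i4 := by
  have hM0 : (0:ℝ) < M := lt_of_lt_of_le one_pos hM
  have h12 : (0:ℝ) < 12 * M ^ 3 := by positivity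
  have hσ0 : (0:ℝ) ≤ 24 * M ^ 3 * ν + 6 * M ^ 3 * δ := by positivity
  nlinarith [h3,
    mul_le_mul_of_nonneg_left hA2 h12.le,
    mul_le_mul_of_nonneg_left hA1 (by positivity : (0:ℝ) ≤ 12 * α * M),
    mul_nonneg (by positivity : (0:ℝ) ≤ 6 * α * M) (sq_nonneg (M * b - a)),
    mul_le_mul_of_nonneg_left hPh hσ0,
    mul_nonneg hσ0 (sq_nonneg (t * q - p)),
    mul_le_mul_of_nonneg_left hδ' (by positivity : (0:ℝ) ≤ 12 * M ^ 3 * q ^ 2),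
    mul_le_mul_of_nonneg_left ht1 (by positivity : (0:ℝ) ≤ 3 * M ^ 3 * δ * q ^ 2)]

private lemma stmt3_aux2 (M α ζ δ ν μ a b p q Y1 Y2 : ℝ)
    (hM : 1 ≤ M) (hα : 0 < α) (hζ : 0 < ζ) (hδ : 0 < δ) (hν : 0 ≤ ν)
    (hνμ : ν ≤ μ) (hμζ : μ ≤ ζ) (hδμ : δ ≤ μ)
    (hY1 : Y1 ≤ 12 * M ^ 3 * b + 12 * α * M * a) (hY10 : 0 ≤ Y1)
    (hY2 : Y2 = (24 * M ^ 3 * ν + 6 * M ^ 3 * δ) * p) (hp : 0 ≤ p) :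
    Y1 ^ 2 + Y2 ^ 2 ≤
      (288 * M ^ 6 + 288 * α ^ 2 * M ^ 2 + 900 * M ^ 6 * ζ ^ 2)
        * (a ^ 2 + b ^ 2 + p ^ 2 + q ^ 2) := by
  have hM0 : (0:ℝ) < M := lt_of_lt_of_le one_pos hM
  have hσ0 : (0:ℝ) ≤ 24 * M ^ 3 * ν + 6 * M ^ 3 * δ := by positivity
  have hσζ : 24 * M ^ 3 * ν + 6 * M ^ 3 * δ ≤ 30 * M ^ 3 * ζ := by
    nlinarith [mul_nonneg (by positivity : (0:ℝ) ≤ 24 * M ^ 3) (by linarith : (0:ℝ) ≤ ζ - ν),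
      mul_nonneg (by positivity : (0:ℝ) ≤ 6 * M ^ 3) (by linarith : (0:ℝ) ≤ ζ - δ)]
  have e1 : Y1 ^ 2 ≤ (12 * M ^ 3 * b + 12 * α * M * a) ^ 2 := pow_le_pow_left₀ hY10 hY1 2
  have e2 : Y2 ^ 2 ≤ (30 * M ^ 3 * ζ) ^ 2 * p ^ 2 := by
    rw [hY2, mul_pow]
    exact mul_le_mul_of_nonneg_right (pow_le_pow_left₀ hσ0 hσζ 2) (sq_nonneg _)
  nlinarith [e1, e2, sq_nonneg (12 * M ^ 3 * b - 12 * α * M * a),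
    mul_nonneg (by positivity : (0:ℝ) ≤ 288 * M ^ 6) (sq_nonneg a),
    mul_nonneg (by positivity : (0:ℝ) ≤ 288 * M ^ 6) (sq_nonneg p),
    mul_nonneg (by positivity : (0:ℝ) ≤ 288 * M ^ 6) (sq_nonneg q),
    mul_nonneg (by positivity : (0:ℝ) ≤ 288 * α ^ 2 * M ^ 2) (sq_nonneg b),
    mul_nonneg (by positivity : (0:ℝ) ≤ 288 * α ^ 2 * M ^ 2) (sq_nonneg p),
    mul_nonneg (by positivity : (0:ℝ) ≤ 288 * α ^ 2 * M ^ 2) (sq_nonneg q),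
    mul_nonneg (by positivity : (0:ℝ) ≤ 900 * M ^ 6 * ζ ^ 2) (sq_nonneg a),
    mul_nonneg (by positivity : (0:ℝ) ≤ 900 * M ^ 6 * ζ ^ 2) (sq_nonneg b),
    mul_nonneg (by positivity : (0:ℝ) ≤ 900 * M ^ 6 * ζ ^ 2) (sq_nonneg q)]

set_option maxHeartbeats 4000000 in
/-- Lemma 4.5: the sufficient condition for the discrete inf-sup inequality. -/
theorem stmt3 (M α ζ δ : ℝ) (hM : 1 ≤ M) (hα : 0 < α) (hζ : 0 < ζ) (hδ : 0 < δ) :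
    ∃ β : ℝ, 0 < β ∧
      ∀ (V : Type) (_ : NormedAddCommGroup V) (_ : InnerProductSpace ℝ V) (_ : CompleteSpace V)
        (L : Type) (_ : NormedAddCommGroup L) (_ : InnerProductSpace ℝ L) (_ : CompleteSpace L)
        (A : V →L[ℝ] V), (∀ v : V, ‖A v‖ ≤ M * ‖v‖) → (∀ v : V, α * ‖v‖ ^ 2 ≤ ⟪A v, v⟫) →
      ∀ (Φ : L →L[ℝ] L), ‖Φ‖ ≤ 1 →
      ∀ (Xh : Submodule ℝ (V × V × L × L)),
      closure ((fun z : V × V × L × L => z.1) '' (Xh : Set (V × V × L × L))) ⊆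
        closure ((fun z : V × V × L × L => z.2.1) '' (Xh : Set (V × V × L × L))) →
      ∀ μ ν : ℝ, 0 < μ → μ ≤ ζ → 0 ≤ ν → ν ≤ μ → δ ≤ μ - ν * ‖Φ‖ ^ 2 →
      (∀ x ∈ Xh, μ * ‖x.2.2.2‖ ^ 2 - ν * ‖x.2.2.1‖ ^ 2 ≤
        ⟪x.1, x.2.1⟫ + α ^ 2 / (12 * M ^ 3) * (‖x.2.1‖ ^ 2 + ‖x.1‖ ^ 2)) →
      ∀ x ∈ Xh,
        β * Real.sqrt (‖x.1‖ ^ 2 + ‖x.2.1‖ ^ 2 + ‖x.2.2.1‖ ^ 2 + ‖x.2.2.2‖ ^ 2) ≤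
        sSup { r : ℝ |
          ∃ y₁ ∈ closure ((fun z : V × V × L × L => z.2.1) '' (Xh : Set (V × V × L × L))),
          ∃ y₂ ∈ closure ((fun z : V × V × L × L => z.2.2.1) '' (Xh : Set (V × V × L × L))),
          ‖y₁‖ ^ 2 + ‖y₂‖ ^ 2 = 1 ∧
            r = ⟪x.1 + A x.2.1, y₁⟫ + ⟪x.2.2.1 - Φ x.2.2.2, y₂⟫ } := by
  have hM0 : (0:ℝ) < M := lt_of_lt_of_le one_pos hM
  have hM3 : M ≤ M ^ 3 := by nlinarith [mul_nonneg (mul_nonneg hM0.le (by linarith : (0:ℝ) ≤ M - 1)) (by linarith : (0:ℝ) ≤ M + 1)]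
  have hM31 : (1:ℝ) ≤ M ^ 3 := by nlinarith [mul_nonneg (by linarith : (0:ℝ) ≤ M - 1) (by positivity : (0:ℝ) ≤ M ^ 2 + M + 1)]
  set κ : ℝ := min (5 * α * M) (3 * δ) with hκdef
  set Csq : ℝ := 288 * M ^ 6 + 288 * α ^ 2 * M ^ 2 + 900 * M ^ 6 * ζ ^ 2 with hCsqdef
  set C : ℝ := Real.sqrt Csq with hCdef
  have hCsq0 : 0 < Csq := by positivity
  have hC0 : 0 < C := Real.sqrt_pos.mpr hCsq0
  have hC2 : C ^ 2 = Csq := Real.sq_sqrt hCsq0.le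
  have hκ0 : 0 < κ := lt_min (by positivity) (by positivity)
  refine ⟨κ / C, div_pos hκ0 hC0, ?_⟩
  intro V _ _ _ L _ _ _ A hAbd hAco Φ hΦ Xh hsub μ ν hμ hμζ hν hνμ hδ' hcoer x hx
  set Tex : ℝ := ‖x.1‖ ^ 2 + ‖x.2.1‖ ^ 2 + ‖x.2.2.1‖ ^ 2 + ‖x.2.2.2‖ ^ 2 with hTexdef
  set SS : Set ℝ := { r : ℝ |
          ∃ y₁ ∈ closure ((fun z : V × V × L × L => z.2.1) '' (Xh : Set (V × V × L × L))),
          ∃ y₂ ∈ closure ((fun z : V × V × L × L => z.2.2.1) '' (Xh : Set (V × V × L × L))),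
          ‖y₁‖ ^ 2 + ‖y₂‖ ^ 2 = 1 ∧
            r = ⟪x.1 + A x.2.1, y₁⟫ + ⟪x.2.2.1 - Φ x.2.2.2, y₂⟫ } with hSSdef
  -- basic positivity facts
  have h12 : (0:ℝ) < 12 * M ^ 3 := by positivity
  have hΦ2 : ‖Φ‖ ^ 2 ≤ 1 := by nlinarith only [hΦ, norm_nonneg (Φ : L →L[ℝ] L)]
  have hσ0 : (0:ℝ) ≤ 24 * M ^ 3 * ν + 6 * M ^ 3 * δ := by positivity
  -- closed submodules
  set K2 : Submodule ℝ V :=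
    (Xh.map ((LinearMap.fst ℝ V (L × L)).comp (LinearMap.snd ℝ V (V × L × L)))).topologicalClosure with hK2def
  set K3 : Submodule ℝ L :=
    (Xh.map ((LinearMap.fst ℝ L L).comp ((LinearMap.snd ℝ V (L × L)).comp (LinearMap.snd ℝ V (V × L × L))))).topologicalClosure with hK3def
  have hK2 : closure ((fun z : V × V × L × L => z.2.1) '' (Xh : Set (V × V × L × L))) = (K2 : Set V) := by
    rw [hK2def, Submodule.topologicalClosure_coe, Submodule.map_coe]; rfl
  have hK3 : closure ((fun z : V × V × L × L => z.2.2.1) '' (Xh : Set (V × V × L × L))) = (K3 : Set L) := by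
    rw [hK3def, Submodule.topologicalClosure_coe, Submodule.map_coe]; rfl
  have hx1K2 : x.1 ∈ K2 := by
    have h1 : x.1 ∈ closure ((fun z : V × V × L × L => z.1) '' (Xh : Set (V × V × L × L))) :=
      subset_closure ⟨x, hx, rfl⟩
    have h2 := hsub h1
    rwa [hK2] at h2
  have hx2K2 : x.2.1 ∈ K2 := by
    have h2 : x.2.1 ∈ closure ((fun z : V × V × L × L => z.2.1) '' (Xh : Set (V × V × L × L))) :=
      subset_closure ⟨x, hx, rfl⟩
    rwa [hK2] at h2
  have hx3K3 : x.2.2.1 ∈ K3 := by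
    have h2 : x.2.2.1 ∈ closure ((fun z : V × V × L × L => z.2.2.1) '' (Xh : Set (V × V × L × L))) :=
      subset_closure ⟨x, hx, rfl⟩
    rwa [hK3] at h2
  -- test functions
  set y₁ : V := (12 * M ^ 3 : ℝ) • x.2.1 + (12 * α * M : ℝ) • x.1 with hy1def
  set y₂ : L := (24 * M ^ 3 * ν + 6 * M ^ 3 * δ : ℝ) • x.2.2.1 with hy2def
  set Sval : ℝ := ⟪x.1 + A x.2.1, y₁⟫ + ⟪x.2.2.1 - Φ x.2.2.2, y₂⟫ with hSvaldef
  have hy1K2 : y₁ ∈ K2 := K2.add_mem (K2.smul_mem _ hx2K2) (K2.smul_mem _ hx1K2)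
  have hy2K3 : y₂ ∈ K3 := K3.smul_mem _ hx3K3
  have hexp : Sval = 12 * M ^ 3 * ⟪x.1, x.2.1⟫ + 12 * α * M * ‖x.1‖ ^ 2
      + 12 * M ^ 3 * ⟪A x.2.1, x.2.1⟫ + 12 * α * M * ⟪A x.2.1, x.1⟫
      + (24 * M ^ 3 * ν + 6 * M ^ 3 * δ) * ‖x.2.2.1‖ ^ 2
      - (24 * M ^ 3 * ν + 6 * M ^ 3 * δ) * ⟪Φ x.2.2.2, x.2.2.1⟫ := by
    rw [hSvaldef, hy1def, hy2def]
    simp only [inner_add_left, inner_add_right, inner_sub_left, real_inner_smul_right,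
      real_inner_self_eq_norm_sq]
    ring
  -- the coercivity-type lower bound for Sval
  have h3' : 12 * M ^ 3 * (μ * ‖x.2.2.2‖ ^ 2 - ν * ‖x.2.2.1‖ ^ 2)
      ≤ 12 * M ^ 3 * ⟪x.1, x.2.1⟫ + α ^ 2 * (‖x.2.1‖ ^ 2 + ‖x.1‖ ^ 2) := by
    have h := hcoer x hx
    have hkey : 12 * M ^ 3 * (α ^ 2 / (12 * M ^ 3) * (‖x.2.1‖ ^ 2 + ‖x.1‖ ^ 2))
        = α ^ 2 * (‖x.2.1‖ ^ 2 + ‖x.1‖ ^ 2) := by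
      field_simp
    have h2 := mul_le_mul_of_nonneg_left h h12.le
    rw [mul_add] at h2
    linarith only [h2, hkey]
  have hA1 : -(M * ‖x.2.1‖ * ‖x.1‖) ≤ ⟪A x.2.1, x.1⟫ := by
    have h1 : |⟪A x.2.1, x.1⟫| ≤ ‖A x.2.1‖ * ‖x.1‖ := abs_real_inner_le_norm _ _
    have h2 : ‖A x.2.1‖ * ‖x.1‖ ≤ M * ‖x.2.1‖ * ‖x.1‖ :=
      mul_le_mul_of_nonneg_right (hAbd x.2.1) (norm_nonneg _)
    have h3 := neg_abs_le ⟪A x.2.1, x.1⟫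
    linarith only [h1, h2, h3]
  have hΦ1 : ⟪Φ x.2.2.2, x.2.2.1⟫ ≤ ‖Φ‖ * ‖x.2.2.2‖ * ‖x.2.2.1‖ := by
    have h1 : ⟪Φ x.2.2.2, x.2.2.1⟫ ≤ ‖Φ x.2.2.2‖ * ‖x.2.2.1‖ := real_inner_le_norm _ _
    have h2 : ‖Φ x.2.2.2‖ * ‖x.2.2.1‖ ≤ ‖Φ‖ * ‖x.2.2.2‖ * ‖x.2.2.1‖ :=
      mul_le_mul_of_nonneg_right (Φ.le_opNorm _) (norm_nonneg _)
    linarith only [h1, h2]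
  have hS1 : (6 * α * M - α ^ 2) * ‖x.1‖ ^ 2 + (6 * α * M ^ 3 - α ^ 2) * ‖x.2.1‖ ^ 2
      + 3 * M ^ 3 * δ * ‖x.2.2.1‖ ^ 2 + 9 * M ^ 3 * δ * ‖x.2.2.2‖ ^ 2 ≤ Sval := by
    rw [hexp]
    have := stmt3_aux1 M α δ μ ν ‖Φ‖ ‖x.1‖ ‖x.2.1‖ ‖x.2.2.1‖ ‖x.2.2.2‖
      ⟪x.1, x.2.1⟫ ⟪A x.2.1, x.2.1⟫ ⟪A x.2.1, x.1⟫ ⟪Φ x.2.2.2, x.2.2.1⟫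
      hM hα hδ hν hΦ2 hδ' h3' (hAco x.2.1) hA1 hΦ1
    linarith only [this]
  -- coefficient bounds (with degenerate case M < α handled via triviality of V)
  have hκa : κ * ‖x.1‖ ^ 2 ≤ (6 * α * M - α ^ 2) * ‖x.1‖ ^ 2 := by
    rcases le_or_gt α M with h | h
    · have hκle : κ ≤ 6 * α * M - α ^ 2 := by
        have h5 := min_le_left (5 * α * M) (3 * δ)
        nlinarith only [h5, h, hα, hM, hκdef, mul_pos hα (lt_of_lt_of_le one_pos hM)]
      exact mul_le_mul_of_nonneg_right hκle (sq_nonneg _)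
    · have hx1 : x.1 = 0 := by
        by_contra h0
        have hv : 0 < ‖x.1‖ := norm_pos_iff.mpr h0
        have h1 := hAco x.1
        have h2 : ⟪A x.1, x.1⟫ ≤ ‖A x.1‖ * ‖x.1‖ := real_inner_le_norm _ _
        have h3 : ‖A x.1‖ * ‖x.1‖ ≤ M * ‖x.1‖ * ‖x.1‖ :=
          mul_le_mul_of_nonneg_right (hAbd x.1) (norm_nonneg _)
        nlinarith only [h1, h2, h3, hv, mul_pos (sub_pos.mpr h) (mul_pos hv hv)]
      rw [hx1]; simp
  have hκb : κ * ‖x.2.1‖ ^ 2 ≤ (6 * α * M ^ 3 - α ^ 2) * ‖x.2.1‖ ^ 2 := by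
    rcases le_or_gt α M with h | h
    · have hκle : κ ≤ 6 * α * M ^ 3 - α ^ 2 := by
        have h4 := min_le_left (5 * α * M) (3 * δ)
        nlinarith only [h4, h, hα, hM, hM3, hκdef,
          mul_le_mul_of_nonneg_left hM3 hα.le,
          mul_le_mul_of_nonneg_left h (mul_pos hα (lt_of_lt_of_le one_pos hM)).le,
          mul_le_mul_of_nonneg_left hM3 (mul_pos hα hα).le]
      exact mul_le_mul_of_nonneg_right hκle (sq_nonneg _)
    · have hx2 : x.2.1 = 0 := by
        by_contra h0
        have hv : 0 < ‖x.2.1‖ := norm_pos_iff.mpr h0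
        have h1 := hAco x.2.1
        have h2 : ⟪A x.2.1, x.2.1⟫ ≤ ‖A x.2.1‖ * ‖x.2.1‖ := real_inner_le_norm _ _
        have h3 : ‖A x.2.1‖ * ‖x.2.1‖ ≤ M * ‖x.2.1‖ * ‖x.2.1‖ :=
          mul_le_mul_of_nonneg_right (hAbd x.2.1) (norm_nonneg _)
        nlinarith only [h1, h2, h3, hv, mul_pos (sub_pos.mpr h) (mul_pos hv hv)]
      rw [hx2]; simp
  have hκp : κ * ‖x.2.2.1‖ ^ 2 ≤ 3 * M ^ 3 * δ * ‖x.2.2.1‖ ^ 2 := by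
    have hκle : κ ≤ 3 * M ^ 3 * δ := by
      have h5 := min_le_right (5 * α * M) (3 * δ)
      linarith only [h5, hκdef, mul_le_mul_of_nonneg_right hM31 (by positivity : (0:ℝ) ≤ 3 * δ)]
    exact mul_le_mul_of_nonneg_right hκle (sq_nonneg _)
  have hκq : κ * ‖x.2.2.2‖ ^ 2 ≤ 9 * M ^ 3 * δ * ‖x.2.2.2‖ ^ 2 := by
    have hκle : κ ≤ 9 * M ^ 3 * δ := by
      have h5 := min_le_right (5 * α * M) (3 * δ)
      linarith only [h5, hδ, mul_le_mul_of_nonneg_right hM31 (by positivity : (0:ℝ) ≤ 3 * δ)]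
    exact mul_le_mul_of_nonneg_right hκle (sq_nonneg _)
  have hS : κ * Tex ≤ Sval := by
    rw [hTexdef]
    linarith only [hS1, hκa, hκb, hκp, hκq]
  -- a uniform upper bound for the set
  have hBdd : BddAbove SS := by
    refine ⟨‖x.1 + A x.2.1‖ + ‖x.2.2.1 - Φ x.2.2.2‖, ?_⟩
    rintro r ⟨z₁, -, z₂, -, hnorm, rfl⟩
    have h1 : ⟪x.1 + A x.2.1, z₁⟫ ≤ ‖x.1 + A x.2.1‖ * ‖z₁‖ := real_inner_le_norm _ _
    have h2 : ⟪x.2.2.1 - Φ x.2.2.2, z₂⟫ ≤ ‖x.2.2.1 - Φ x.2.2.2‖ * ‖z₂‖ := real_inner_le_norm _ _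
    have hz1 : ‖z₁‖ ≤ 1 := by nlinarith only [hnorm, norm_nonneg z₁, norm_nonneg z₂, sq_nonneg ‖z₂‖]
    have hz2 : ‖z₂‖ ≤ 1 := by nlinarith only [hnorm, norm_nonneg z₁, norm_nonneg z₂, sq_nonneg ‖z₁‖]
    have h3 := mul_le_mul_of_nonneg_left hz1 (norm_nonneg (x.1 + A x.2.1))
    have h4 := mul_le_mul_of_nonneg_left hz2 (norm_nonneg (x.2.2.1 - Φ x.2.2.2))
    linarith only [h1, h2, h3, h4]
  have hT0 : (0:ℝ) ≤ Tex := by rw [hTexdef]; positivity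
  rcases hT0.eq_or_lt with hTz | hTpos
  · -- degenerate case: x = 0
    have hTz' : ‖x.1‖ ^ 2 + ‖x.2.1‖ ^ 2 + ‖x.2.2.1‖ ^ 2 + ‖x.2.2.2‖ ^ 2 = 0 := by
      rw [hTexdef] at hTz; linarith only [hTz]
    have ha : ‖x.1‖ ^ 2 = 0 := by
      linarith only [hTz', sq_nonneg ‖x.2.1‖, sq_nonneg ‖x.2.2.1‖, sq_nonneg ‖x.2.2.2‖, sq_nonneg ‖x.1‖]
    have hb : ‖x.2.1‖ ^ 2 = 0 := by
      linarith only [hTz', sq_nonneg ‖x.2.1‖, sq_nonneg ‖x.2.2.1‖, sq_nonneg ‖x.2.2.2‖, sq_nonneg ‖x.1‖]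
    have hp : ‖x.2.2.1‖ ^ 2 = 0 := by
      linarith only [hTz', sq_nonneg ‖x.2.1‖, sq_nonneg ‖x.2.2.1‖, sq_nonneg ‖x.2.2.2‖, sq_nonneg ‖x.1‖]
    have hq : ‖x.2.2.2‖ ^ 2 = 0 := by
      linarith only [hTz', sq_nonneg ‖x.2.1‖, sq_nonneg ‖x.2.2.1‖, sq_nonneg ‖x.2.2.2‖, sq_nonneg ‖x.1‖]
    have hx1 : x.1 = 0 := norm_eq_zero.mp ((pow_eq_zero_iff two_ne_zero).mp ha)
    have hx2 : x.2.1 = 0 := norm_eq_zero.mp ((pow_eq_zero_iff two_ne_zero).mp hb)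
    have hx3 : x.2.2.1 = 0 := norm_eq_zero.mp ((pow_eq_zero_iff two_ne_zero).mp hp)
    have hx4 : x.2.2.2 = 0 := norm_eq_zero.mp ((pow_eq_zero_iff two_ne_zero).mp hq)
    have hsqrt : Real.sqrt Tex = 0 := by rw [← hTz, Real.sqrt_zero]
    rw [hsqrt, mul_zero]
    rcases Set.eq_empty_or_nonempty SS with he | ⟨r, hr⟩
    · rw [he, Real.sSup_empty]
    · have hr0 : r = 0 := by
        obtain ⟨z₁, -, z₂, -, -, rfl⟩ := hr
        rw [hx1, hx2, hx3, hx4]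
        simp
      have := le_csSup hBdd hr
      rw [hr0] at this
      exact this
  · -- main case
    have hSpos : 0 < Sval := lt_of_lt_of_le (mul_pos hκ0 hTpos) hS
    set m : ℝ := ‖y₁‖ ^ 2 + ‖y₂‖ ^ 2 with hmdef
    have hm0 : (0:ℝ) ≤ m := by rw [hmdef]; positivity
    have hmpos : 0 < m := by
      rcases hm0.eq_or_lt with hmz | h
      · exfalso
        have hz1 : y₁ = 0 := by
          have h0 : ‖y₁‖ ^ 2 = 0 := by
            rw [hmdef] at hmz
            linarith only [hmz, sq_nonneg ‖y₁‖, sq_nonneg ‖y₂‖]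
          exact norm_eq_zero.mp ((pow_eq_zero_iff two_ne_zero).mp h0)
        have hz2 : y₂ = 0 := by
          have h0 : ‖y₂‖ ^ 2 = 0 := by
            rw [hmdef] at hmz
            linarith only [hmz, sq_nonneg ‖y₁‖, sq_nonneg ‖y₂‖]
          exact norm_eq_zero.mp ((pow_eq_zero_iff two_ne_zero).mp h0)
        have h6 : Sval = 0 := by rw [hSvaldef, hz1, hz2]; simp
        linarith only [h6, hSpos]
      · exact h
    set n : ℝ := Real.sqrt m with hndef
    have hn : 0 < n := Real.sqrt_pos.mpr hmpos
    have hn2 : n ^ 2 = m := Real.sq_sqrt hm0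
    -- the normalized test function is in the set
    have hmem1 : n⁻¹ • y₁ ∈ closure ((fun z : V × V × L × L => z.2.1) '' (Xh : Set (V × V × L × L))) := by
      rw [hK2]; exact K2.smul_mem _ hy1K2
    have hmem2 : n⁻¹ • y₂ ∈ closure ((fun z : V × V × L × L => z.2.2.1) '' (Xh : Set (V × V × L × L))) := by
      rw [hK3]; exact K3.smul_mem _ hy2K3
    have hns : ‖n⁻¹ • y₁‖ ^ 2 + ‖n⁻¹ • y₂‖ ^ 2 = 1 := by
      rw [norm_smul, norm_smul, mul_pow, mul_pow]
      have habs : ‖(n⁻¹ : ℝ)‖ ^ 2 = (n ^ 2)⁻¹ := by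
        rw [Real.norm_eq_abs, ← abs_pow, abs_of_pos (by positivity), inv_pow]
      rw [habs, hn2]
      field_simp [hmdef]
      exact hmdef.symm
    have hmem : (⟪x.1 + A x.2.1, n⁻¹ • y₁⟫ + ⟪x.2.2.1 - Φ x.2.2.2, n⁻¹ • y₂⟫ : ℝ) ∈ SS :=
      ⟨n⁻¹ • y₁, hmem1, n⁻¹ • y₂, hmem2, hns, rfl⟩
    have hval : (⟪x.1 + A x.2.1, n⁻¹ • y₁⟫ + ⟪x.2.2.1 - Φ x.2.2.2, n⁻¹ • y₂⟫ : ℝ)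
        = n⁻¹ * Sval := by
      rw [real_inner_smul_right, real_inner_smul_right, hSvaldef]; ring
    -- norm bound on the test function
    have e1 : ‖y₁‖ ≤ 12 * M ^ 3 * ‖x.2.1‖ + 12 * α * M * ‖x.1‖ := by
      rw [hy1def]
      refine (norm_add_le _ _).trans ?_
      rw [norm_smul, norm_smul, Real.norm_eq_abs, Real.norm_eq_abs,
        abs_of_nonneg (by positivity : (0:ℝ) ≤ 12 * M ^ 3),
        abs_of_nonneg (by positivity : (0:ℝ) ≤ 12 * α * M)]
    have e2 : ‖y₂‖ = (24 * M ^ 3 * ν + 6 * M ^ 3 * δ) * ‖x.2.2.1‖ := by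
      rw [hy2def, norm_smul, Real.norm_eq_abs, abs_of_nonneg hσ0]
    have hδμ : δ ≤ μ := by nlinarith only [hδ', mul_nonneg hν (sq_nonneg ‖Φ‖)]
    have hmC : m ≤ Csq * Tex := by
      rw [hmdef, hCsqdef, hTexdef]
      exact stmt3_aux2 M α ζ δ ν μ ‖x.1‖ ‖x.2.1‖ ‖x.2.2.1‖ ‖x.2.2.2‖ ‖y₁‖ ‖y₂‖
        hM hα hζ hδ hν hνμ hμζ hδμ e1 (norm_nonneg _) e2 (norm_nonneg _)
    have hnle : n ≤ C * Real.sqrt Tex := by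
      rw [hndef]
      calc Real.sqrt m ≤ Real.sqrt (Csq * Tex) := Real.sqrt_le_sqrt hmC
        _ = C * Real.sqrt Tex := by rw [Real.sqrt_mul hCsq0.le, hCdef]
    have hfinal : κ / C * Real.sqrt Tex ≤ n⁻¹ * Sval := by
      rw [← div_eq_inv_mul, le_div_iff₀ hn]
      have h4 : κ / C * Real.sqrt Tex * n ≤ κ / C * Real.sqrt Tex * (C * Real.sqrt Tex) :=
        mul_le_mul_of_nonneg_left hnle (by positivity)
      have hsq : Real.sqrt Tex * Real.sqrt Tex = Tex := Real.mul_self_sqrt hT0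
      have h5 : κ / C * Real.sqrt Tex * (C * Real.sqrt Tex) = κ * Tex := by
        calc κ / C * Real.sqrt Tex * (C * Real.sqrt Tex)
            = κ * (Real.sqrt Tex * Real.sqrt Tex) * (C / C) := by ring
          _ = κ * Tex := by rw [div_self hC0.ne', hsq, mul_one]
      exact le_trans (le_trans h4 (le_of_eq h5)) hS
    calc κ / C * Real.sqrt Tex ≤ n⁻¹ * Sval := hfinal
      _ = ⟪x.1 + A x.2.1, n⁻¹ • y₁⟫ + ⟪x.2.2.1 - Φ x.2.2.2, n⁻¹ • y₂⟫ := hval.symm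
      _ ≤ sSup SS := le_csSup hBdd hmem
end

section
/- Let X be a finite-dimensional real vector space, L and V real Hilbert spaces, P : X → L and G : X → V linear maps, and S : V → V a continuous self-adjoint linear operator with ⟨S ξ, ξ⟩ ≥ 0 for all ξ ∈ V. Let R : X → X be a linear map satisfying ⟨S G(R u), G v⟩_V = ⟨P u, P v⟩_L for all u, v ∈ X. Let N ≥ 1 be an integer, T > 0, k = T/N, and let w⁰, w¹, …, w^N ∈ X; set δʲ := (wʲ − w^{j−1})/k for j = 1,…,N. Then for every m ∈ {0,…,N}: ‖P w^m‖_L ≤ (Σ_{j=1}^N k ⟨S G(R δʲ), G(R δʲ)⟩)^{1/2} + (Σ_{j=1}^N k ⟨S G wʲ, G wʲ⟩)^{1/2} + ‖P w⁰‖_L. -/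
open scoped RealInnerProductSpace

/-- Cauchy–Schwarz for a positive semidefinite self-adjoint operator form. -/
lemma cs_form {V : Type*} [NormedAddCommGroup V] [InnerProductSpace ℝ V] [CompleteSpace V]
    (S : V →L[ℝ] V) (hS : IsSelfAdjoint S) (hSpos : ∀ ξ : V, 0 ≤ ⟪S ξ, ξ⟫) (ξ η : V) :
    ⟪S ξ, η⟫ ≤ Real.sqrt ⟪S ξ, ξ⟫ * Real.sqrt ⟪S η, η⟫ := by
  have hsymm : ∀ x y : V, ⟪S x, y⟫ = ⟪S y, x⟫ := by
    intro x y
    calc ⟪S x, y⟫ = ⟪x, S y⟫ := (ContinuousLinearMap.isSelfAdjoint_iff_isSymmetric.mp hS) x y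
      _ = ⟪S y, x⟫ := real_inner_comm _ _
  have key : (⟪S ξ, η⟫) ^ 2 ≤ ⟪S ξ, ξ⟫ * ⟪S η, η⟫ := by
    have h : ∀ t : ℝ, 0 ≤ ⟪S η, η⟫ * (t * t) + (2 * ⟪S ξ, η⟫) * t + ⟪S ξ, ξ⟫ := by
      intro t
      have h0 := hSpos (ξ + t • η)
      have hexp : ⟪S (ξ + t • η), ξ + t • η⟫ =
          ⟪S η, η⟫ * (t * t) + (2 * ⟪S ξ, η⟫) * t + ⟪S ξ, ξ⟫ := by
        simp only [map_add, map_smul, inner_add_add_self, inner_add_left, inner_add_right,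
          inner_smul_left, inner_smul_right, real_inner_smul_left, real_inner_smul_right,
          ContinuousLinearMap.map_smul, conj_trivial]
        rw [hsymm η ξ]
        ring
      linarith [hexp ▸ h0]
    have hd := discrim_le_zero h
    rw [discrim] at hd
    nlinarith
  calc ⟪S ξ, η⟫ ≤ |⟪S ξ, η⟫| := le_abs_self _
    _ = Real.sqrt ((⟪S ξ, η⟫) ^ 2) := (Real.sqrt_sq_eq_abs _).symm
    _ ≤ Real.sqrt (⟪S ξ, ξ⟫ * ⟪S η, η⟫) := Real.sqrt_le_sqrt key
    _ = Real.sqrt ⟪S ξ, ξ⟫ * Real.sqrt ⟪S η, η⟫ := Real.sqrt_mul (hSpos ξ) _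

/-- Estimate (4.4) of Lemma 4.2: uniform-in-time bound on the reconstructed discrete
solution, expressed through the discrete time sums. -/
theorem stmt4 {X : Type*} [AddCommGroup X] [Module ℝ X] [FiniteDimensional ℝ X]
    {L V : Type*} [NormedAddCommGroup L] [InnerProductSpace ℝ L] [CompleteSpace L]
    [NormedAddCommGroup V] [InnerProductSpace ℝ V] [CompleteSpace V]
    (P : X →ₗ[ℝ] L) (G : X →ₗ[ℝ] V) (S : V →L[ℝ] V) (hS : IsSelfAdjoint S)
    (hSpos : ∀ ξ : V, 0 ≤ ⟪S ξ, ξ⟫)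
    (R : X →ₗ[ℝ] X) (hR : ∀ u v : X, ⟪S (G (R u)), G v⟫ = ⟪P u, P v⟫)
    (N : ℕ) (hN : 1 ≤ N) (T : ℝ) (hT : 0 < T) (k : ℝ) (hk : k = T / N)
    (w : ℕ → X) (δ : ℕ → X)
    (hδ : ∀ j, 1 ≤ j → j ≤ N → δ j = k⁻¹ • (w j - w (j - 1)))
    (m : ℕ) (hm : m ≤ N) :
    ‖P (w m)‖ ≤
      Real.sqrt (∑ j ∈ Finset.Icc 1 N, k * ⟪S (G (R (δ j))), G (R (δ j))⟫) +
      Real.sqrt (∑ j ∈ Finset.Icc 1 N, k * ⟪S (G (w j)), G (w j)⟫) +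
      ‖P (w 0)‖ := by
  have hk0 : 0 < k := by
    rw [hk]
    have : (0 : ℝ) < N := by exact_mod_cast hN
    positivity
  set a : ℕ → ℝ := fun j => Real.sqrt ⟪S (G (R (δ j))), G (R (δ j))⟫ with ha
  set b : ℕ → ℝ := fun j => Real.sqrt ⟪S (G (w j)), G (w j)⟫ with hb
  set c : ℝ := ‖P (w 0)‖ with hc
  have ha0 : ∀ j, 0 ≤ a j := fun j => Real.sqrt_nonneg _
  have hb0 : ∀ j, 0 ≤ b j := fun j => Real.sqrt_nonneg _
  have hc0 : 0 ≤ c := norm_nonneg _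
  -- Step A: per-step estimate
  have stepA : ∀ j : ℕ, 1 ≤ j → j ≤ N →
      ‖P (w j)‖ ^ 2 - ‖P (w (j - 1))‖ ^ 2 ≤ 2 * (k * (a j * b j)) := by
    intro j hj1 hjN
    have hw : w j - w (j - 1) = k • δ j := by
      rw [hδ j hj1 hjN, smul_smul, mul_inv_cancel₀ (ne_of_gt hk0), one_smul]
    have hdiff : ‖P (w j)‖ ^ 2 - ‖P (w (j - 1))‖ ^ 2 ≤
        2 * ⟪P (w j) - P (w (j - 1)), P (w j)⟫ := by
      have h1 : ‖P (w j) - P (w (j - 1))‖ ^ 2 =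
          ‖P (w j)‖ ^ 2 - 2 * ⟪P (w j), P (w (j - 1))⟫ + ‖P (w (j - 1))‖ ^ 2 := by
        rw [← real_inner_self_eq_norm_sq, ← real_inner_self_eq_norm_sq,
          ← real_inner_self_eq_norm_sq, inner_sub_sub_self]
        rw [real_inner_comm (P (w (j-1))) (P (w j))]
        ring
      have h2 : ⟪P (w j) - P (w (j - 1)), P (w j)⟫ =
          ‖P (w j)‖ ^ 2 - ⟪P (w j), P (w (j - 1))⟫ := by
        rw [inner_sub_left, ← real_inner_self_eq_norm_sq,
          real_inner_comm (P (w (j-1))) (P (w j))]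
      nlinarith [sq_nonneg ‖P (w j) - P (w (j - 1))‖]
    have hkey : ⟪P (w j) - P (w (j - 1)), P (w j)⟫ ≤ k * (a j * b j) := by
      have : P (w j) - P (w (j - 1)) = k • P (δ j) := by
        rw [← map_sub, hw, map_smul]
      rw [this, real_inner_smul_left, ← hR (δ j) (w j)]
      have hcs := cs_form S hS hSpos (G (R (δ j))) (G (w j))
      have := mul_le_mul_of_nonneg_left hcs (le_of_lt hk0)
      simpa [ha, hb] using this
    linarith
  -- Step B: telescoping
  have stepB : ‖P (w m)‖ ^ 2 ≤ c ^ 2 + 2 * ∑ j ∈ Finset.Icc 1 N, k * (a j * b j) := by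
    have htel : ‖P (w m)‖ ^ 2 - c ^ 2 =
        ∑ i ∈ Finset.range m, (‖P (w (i + 1))‖ ^ 2 - ‖P (w i)‖ ^ 2) := by
      rw [Finset.sum_range_sub (fun i => ‖P (w i)‖ ^ 2) m]
    have hbound : ∑ i ∈ Finset.range m, (‖P (w (i + 1))‖ ^ 2 - ‖P (w i)‖ ^ 2) ≤
        ∑ i ∈ Finset.range m, 2 * (k * (a (i + 1) * b (i + 1))) := by
      apply Finset.sum_le_sum
      intro i hi
      have hi' : i + 1 ≤ N := le_trans (Finset.mem_range.mp hi) hm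
      have := stepA (i + 1) (Nat.le_add_left 1 i) hi'
      simpa using this
    have hext : ∑ i ∈ Finset.range m, 2 * (k * (a (i + 1) * b (i + 1))) ≤
        ∑ i ∈ Finset.range N, 2 * (k * (a (i + 1) * b (i + 1))) := by
      apply Finset.sum_le_sum_of_subset_of_nonneg
      · exact Finset.range_subset_range.mpr hm
      · intro i _ _
        have := mul_nonneg (ha0 (i + 1)) (hb0 (i + 1))
        positivity
    have hconv : ∑ i ∈ Finset.range N, 2 * (k * (a (i + 1) * b (i + 1))) =
        2 * ∑ j ∈ Finset.Icc 1 N, k * (a j * b j) := by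
      rw [Finset.mul_sum]
      rw [show Finset.Icc 1 N = Finset.Ico 1 (N + 1) by rfl]
      rw [Finset.sum_Ico_eq_sum_range]
      simp [add_comm]
    linarith
  -- Step C: discrete Cauchy–Schwarz
  set A : ℝ := Real.sqrt (∑ j ∈ Finset.Icc 1 N, k * ⟪S (G (R (δ j))), G (R (δ j))⟫) with hA
  set B : ℝ := Real.sqrt (∑ j ∈ Finset.Icc 1 N, k * ⟪S (G (w j)), G (w j)⟫) with hB
  have hA0 : 0 ≤ A := Real.sqrt_nonneg _
  have hB0 : 0 ≤ B := Real.sqrt_nonneg _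
  have stepC : ∑ j ∈ Finset.Icc 1 N, k * (a j * b j) ≤ A * B := by
    have hsq := Finset.sum_mul_sq_le_sq_mul_sq (Finset.Icc 1 N)
      (fun j => Real.sqrt k * a j) (fun j => Real.sqrt k * b j)
    have e1 : ∀ j : ℕ, (Real.sqrt k * a j) * (Real.sqrt k * b j) = k * (a j * b j) := by
      intro j
      calc (Real.sqrt k * a j) * (Real.sqrt k * b j)
          = (Real.sqrt k * Real.sqrt k) * (a j * b j) := by ring
        _ = k * (a j * b j) := by rw [Real.mul_self_sqrt hk0.le]
    have e2 : ∀ j : ℕ, (Real.sqrt k * a j) ^ 2 = k * ⟪S (G (R (δ j))), G (R (δ j))⟫ := by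
      intro j
      rw [mul_pow, Real.sq_sqrt (le_of_lt hk0), ha]
      simp only
      rw [Real.sq_sqrt (hSpos _)]
    have e3 : ∀ j : ℕ, (Real.sqrt k * b j) ^ 2 = k * ⟪S (G (w j)), G (w j)⟫ := by
      intro j
      rw [mul_pow, Real.sq_sqrt (le_of_lt hk0), hb]
      simp only
      rw [Real.sq_sqrt (hSpos _)]
    simp only [e1, e2, e3] at hsq
    have hsum0 : 0 ≤ ∑ j ∈ Finset.Icc 1 N, k * (a j * b j) := by
      apply Finset.sum_nonneg
      intro j _
      have := mul_nonneg (ha0 j) (hb0 j)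
      positivity
    calc ∑ j ∈ Finset.Icc 1 N, k * (a j * b j)
        = Real.sqrt ((∑ j ∈ Finset.Icc 1 N, k * (a j * b j)) ^ 2) := by
          rw [Real.sqrt_sq hsum0]
      _ ≤ Real.sqrt ((∑ j ∈ Finset.Icc 1 N, k * ⟪S (G (R (δ j))), G (R (δ j))⟫) *
            ∑ j ∈ Finset.Icc 1 N, k * ⟪S (G (w j)), G (w j)⟫) := Real.sqrt_le_sqrt hsq
      _ = A * B := by
          rw [hA, hB, ← Real.sqrt_mul]
          apply Finset.sum_nonneg
          intro j _
          exact mul_nonneg (le_of_lt hk0) (hSpos _)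
  -- conclude
  have hfinal : ‖P (w m)‖ ^ 2 ≤ (A + B + c) ^ 2 := by
    nlinarith [stepB, stepC, hA0, hB0, hc0, mul_nonneg hA0 hc0, mul_nonneg hB0 hc0]
  calc ‖P (w m)‖ = Real.sqrt (‖P (w m)‖ ^ 2) := by rw [Real.sqrt_sq (norm_nonneg _)]
    _ ≤ Real.sqrt ((A + B + c) ^ 2) := Real.sqrt_le_sqrt hfinal
    _ = A + B + c := Real.sqrt_sq (by linarith)
end

section
/- Let X be a finite-dimensional real vector space, L and V real Hilbert spaces, P : X → L and G : X → V linear maps, and S : V → V a continuous self-adjoint linear operator with ⟨S ξ, ξ⟩ ≥ 0 for all ξ ∈ V. Let R : X → X be a linear map satisfying ⟨S G(R u), G v⟩_V = ⟨P u, P v⟩_L for all u, v ∈ X. Let N ≥ 1 be an integer, T > 0, k = T/N, and let w⁰, w¹, …, w^N ∈ X; set δʲ := (wʲ − w^{j−1})/k for j = 1,…,N. Then Σ_{j=1}^N k ⟨S G(R δʲ), G wʲ⟩ ≥ (1/2)‖P w^N‖²_L − (1/2)‖P w⁰‖²_L. -/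
open scoped RealInnerProductSpace

lemma telescope_aux (f : ℕ → ℝ) (N : ℕ) :
    ∑ j ∈ Finset.Icc 1 N, (f j - f (j - 1)) = f N - f 0 := by
  induction N with
  | zero => simp
  | succ n ih =>
      rw [Finset.sum_Icc_succ_top (by omega : 1 ≤ n + 1), ih]
      simp

/-- Estimate (4.5) of Lemma 4.2:
`Σ_{j=1}^N k ⟨S G(R δʲ), G wʲ⟩ ≥ (1/2)‖P w^N‖² − (1/2)‖P w⁰‖²`. -/
theorem stmt5 {X : Type*} [AddCommGroup X] [Module ℝ X] [FiniteDimensional ℝ X]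
    {L V : Type*} [NormedAddCommGroup L] [InnerProductSpace ℝ L] [CompleteSpace L]
    [NormedAddCommGroup V] [InnerProductSpace ℝ V] [CompleteSpace V]
    (P : X →ₗ[ℝ] L) (G : X →ₗ[ℝ] V) (S : V →L[ℝ] V) (hS : IsSelfAdjoint S)
    (hSpos : ∀ ξ : V, 0 ≤ ⟪S ξ, ξ⟫)
    (R : X →ₗ[ℝ] X) (hR : ∀ u v : X, ⟪S (G (R u)), G v⟫ = ⟪P u, P v⟫)
    (N : ℕ) (hN : 1 ≤ N) (T : ℝ) (hT : 0 < T) (k : ℝ) (hk : k = T / N)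
    (w : ℕ → X) (δ : ℕ → X)
    (hδ : ∀ j, 1 ≤ j → j ≤ N → δ j = k⁻¹ • (w j - w (j - 1))) :
    (1 / 2) * ‖P (w N)‖ ^ 2 - (1 / 2) * ‖P (w 0)‖ ^ 2 ≤
      ∑ j ∈ Finset.Icc 1 N, k * ⟪S (G (R (δ j))), G (w j)⟫ := by
  have hkpos : 0 < k := by
    rw [hk]
    positivity
  have key : ∀ j ∈ Finset.Icc 1 N,
      (1 / 2) * ‖P (w j)‖ ^ 2 - (1 / 2) * ‖P (w (j - 1))‖ ^ 2
        ≤ k * ⟪S (G (R (δ j))), G (w j)⟫ := by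
    intro j hj
    rw [Finset.mem_Icc] at hj
    rw [hR, hδ j hj.1 hj.2]
    have : (P (k⁻¹ • (w j - w (j - 1)))) = k⁻¹ • (P (w j) - P (w (j - 1))) := by
      simp [map_smul, map_sub]
    rw [this, real_inner_smul_left, ← mul_assoc, mul_inv_cancel₀ hkpos.ne', one_mul]
    set a := P (w j)
    set b := P (w (j - 1))
    have h1 : ⟪a - b, a⟫ = ‖a‖ ^ 2 - ⟪b, a⟫ := by
      rw [inner_sub_left, real_inner_self_eq_norm_sq]
    have h2 : ⟪b, a⟫ ≤ ‖b‖ * ‖a‖ := real_inner_le_norm b a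
    nlinarith [sq_nonneg (‖a‖ - ‖b‖)]
  calc (1 / 2) * ‖P (w N)‖ ^ 2 - (1 / 2) * ‖P (w 0)‖ ^ 2
      = ∑ j ∈ Finset.Icc 1 N,
          ((1 / 2) * ‖P (w j)‖ ^ 2 - (1 / 2) * ‖P (w (j - 1))‖ ^ 2) :=
        (telescope_aux (fun j => (1 / 2) * ‖P (w j)‖ ^ 2) N).symm
    _ ≤ _ := Finset.sum_le_sum key
end

section
/- Let X be a finite-dimensional real vector space, L and V real Hilbert spaces, and P : X → L, G : X → V linear maps such that v ↦ ‖G v‖ is a norm on X (i.e. G is injective). Let N ≥ 1 be an integer, k > 0, α > 0, let Φ : L → L be a continuous linear operator with ‖Φ‖ ≤ 1, and for m = 1,…,N let Λᵐ : V → V be a continuous linear operator with ⟨Λᵐ ξ, ξ⟩ ≥ α‖ξ‖² for all ξ ∈ V. Let ξ₀ ∈ L and, for m = 1,…,N, fᵐ ∈ L and Fᵐ ∈ V. Then there exist w⁰, w¹, …, w^N ∈ X such that: (i) ⟨P w⁰ − Φ(P w^N), P u⟩_L = ⟨ξ₀, P u⟩_L for all u ∈ X, and (ii) for all m = 1,…,N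 and all u ∈ X, ⟨P((wᵐ − w^{m−1})/k), P u⟩_L + ⟨Λᵐ G wᵐ, G u⟩_V = ⟨fᵐ, P u⟩_L − ⟨Fᵐ, G u⟩_V. Moreover the solution is unique in the sense that if (w̃⁰, …, w̃^N) is another family satisfying (i) and (ii), then P w̃⁰ = P w⁰ and w̃ᵐ = wᵐ for all m = 1,…,N. -/
open scoped RealInnerProductSpace

lemma le_of_sq_le_mul {a b : ℝ} (ha : 0 ≤ a) (hb : 0 ≤ b) (h : a * a ≤ b * a) : a ≤ b := by
  rcases ha.eq_or_lt with h0 | h0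
  · exact h0 ▸ hb
  · exact le_of_mul_le_mul_right h h0

lemma key_energy {X : Type*} [AddCommGroup X] [Module ℝ X]
    {L V : Type*} [NormedAddCommGroup L] [InnerProductSpace ℝ L]
    [NormedAddCommGroup V] [InnerProductSpace ℝ V]
    (P : X →ₗ[ℝ] L) (G : X →ₗ[ℝ] V) (hG : Function.Injective G)
    (N : ℕ) (hN : 1 ≤ N) (k : ℝ) (hk : 0 < k) (α : ℝ) (hα : 0 < α)
    (Φ : L →L[ℝ] L) (hΦ : ‖Φ‖ ≤ 1) (Λ : ℕ → V →L[ℝ] V)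
    (hΛ : ∀ m, 1 ≤ m → m ≤ N → ∀ ξ : V, α * ‖ξ‖ ^ 2 ≤ ⟪Λ m ξ, ξ⟫)
    (δ : ℕ → X)
    (h1 : ∀ u : X, ⟪P (δ 0) - Φ (P (δ N)), P u⟫ = 0)
    (h2 : ∀ m, 1 ≤ m → m ≤ N → ∀ u : X,
      k⁻¹ * (⟪P (δ m), P u⟫ - ⟪P (δ (m - 1)), P u⟫) + ⟪Λ m (G (δ m)), G u⟫ = 0) :
    P (δ 0) = 0 ∧ ∀ m, 1 ≤ m → m ≤ N → δ m = 0 := by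
  set d : ℕ → ℝ := fun m => ‖P (δ m)‖ with hd
  have hdnn : ∀ m, 0 ≤ d m := fun m => norm_nonneg _
  have hstepa : ∀ m, 1 ≤ m → m ≤ N →
      d m ^ 2 + k * α * ‖G (δ m)‖ ^ 2 ≤ d (m - 1) * d m := by
    intro m h1m hmN
    have e := h2 m h1m hmN (δ m)
    have hcoer := hΛ m h1m hmN (G (δ m))
    have hip : ⟪P (δ (m - 1)), P (δ m)⟫ ≤ d (m - 1) * d m := real_inner_le_norm _ _
    have hself : ⟪P (δ m), P (δ m)⟫ = d m ^ 2 := real_inner_self_eq_norm_sq _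
    have h3 : k⁻¹ * (⟪P (δ m), P (δ m)⟫ - ⟪P (δ (m - 1)), P (δ m)⟫)
        ≤ -(α * ‖G (δ m)‖ ^ 2) := by linarith
    have h4 : ⟪P (δ m), P (δ m)⟫ - ⟪P (δ (m - 1)), P (δ m)⟫
        ≤ k * -(α * ‖G (δ m)‖ ^ 2) := by
      have := mul_le_mul_of_nonneg_left h3 hk.le
      rwa [← mul_assoc, mul_inv_cancel₀ hk.ne', one_mul] at this
    nlinarith
  have hstepb : ∀ m, 1 ≤ m → m ≤ N → d m ≤ d (m - 1) := by
    intro m h1m hmN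
    have ha := hstepa m h1m hmN
    have hg : 0 ≤ k * α * ‖G (δ m)‖ ^ 2 := by positivity
    refine le_of_sq_le_mul (hdnn m) (hdnn (m - 1)) ?_
    nlinarith
  have hstepc : d 0 ≤ d N := by
    have e := h1 (δ 0)
    rw [inner_sub_left, sub_eq_zero] at e
    have hself : ⟪P (δ 0), P (δ 0)⟫ = d 0 * d 0 := real_inner_self_eq_norm_mul_norm _
    have hip : ⟪Φ (P (δ N)), P (δ 0)⟫ ≤ ‖Φ (P (δ N))‖ * d 0 := real_inner_le_norm _ _
    have hop : ‖Φ (P (δ N))‖ ≤ ‖Φ‖ * d N := Φ.le_opNorm _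
    refine le_of_sq_le_mul (hdnn 0) (hdnn N) ?_
    have h5 : ‖Φ‖ * d N ≤ d N := by nlinarith [hdnn N, norm_nonneg Φ]
    nlinarith [hdnn 0]
  have hmono : ∀ j, j ≤ N → ∀ i, i ≤ j → d j ≤ d i := by
    intro j
    induction j with
    | zero => intro _ i hi; interval_cases i; exact le_rfl
    | succ j ih =>
      intro hj i hi
      have hb : d (j + 1) ≤ d j := by
        have := hstepb (j + 1) (by omega) hj
        simpa using this
      rcases Nat.eq_or_lt_of_le hi with h | h
      · exact h ▸ le_rfl
      · exact hb.trans (ih (by omega) i (by omega))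
  have h0N : d 0 = d N := le_antisymm hstepc (hmono N le_rfl 0 (Nat.zero_le _))
  have hall : ∀ m, m ≤ N → d m = d 0 := by
    intro m hm
    refine le_antisymm (hmono m hm 0 (Nat.zero_le _)) ?_
    calc d 0 = d N := h0N
    _ ≤ d m := hmono N le_rfl m hm
  have hzero : ∀ m, 1 ≤ m → m ≤ N → δ m = 0 := by
    intro m h1m hmN
    have ha := hstepa m h1m hmN
    have h1' : d m = d 0 := hall m hmN
    have h2' : d (m - 1) = d 0 := hall (m - 1) (by omega)
    rw [h1', h2'] at ha
    have hg2 : ‖G (δ m)‖ ^ 2 ≤ 0 := by nlinarith [mul_pos hk hα]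
    have hg : G (δ m) = 0 := by
      have : ‖G (δ m)‖ = 0 := by nlinarith [norm_nonneg (G (δ m)), sq_nonneg ‖G (δ m)‖]
      exact norm_eq_zero.mp this
    exact hG (by simpa using hg)
  refine ⟨?_, hzero⟩
  have hdN : d N = 0 := by
    have : δ N = 0 := hzero N hN le_rfl
    simp [hd, this]
  have : d 0 = 0 := by rw [h0N]; exact hdN
  simpa [hd] using this

section BigMap

set_option linter.unusedSectionVars false

variable {X : Type*} [AddCommGroup X] [Module ℝ X] [FiniteDimensional ℝ X]
    {L V : Type*} [NormedAddCommGroup L] [InnerProductSpace ℝ L]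
    [NormedAddCommGroup V] [InnerProductSpace ℝ V]

/-- The "previous value" map: for the `m`-th step (0-indexed), returns the reconstructed
previous value in `L`. -/
noncomputable def prevMap (P : X →ₗ[ℝ] L) (N : ℕ) (m : Fin N) :
    (↥(LinearMap.range P) × (Fin N → X)) →ₗ[ℝ] L :=
  if (m : ℕ) = 0 then
    (LinearMap.range P).subtype ∘ₗ LinearMap.fst ℝ _ _
  else
    P ∘ₗ LinearMap.proj (⟨(m : ℕ) - 1, Nat.lt_of_le_of_lt (Nat.sub_le _ _) m.isLt⟩ : Fin N)
      ∘ₗ LinearMap.snd ℝ _ _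

/-- The big linear map encoding the whole implicit Euler gradient scheme. -/
noncomputable def bigMap (P : X →ₗ[ℝ] L) (G : X →ₗ[ℝ] V) (N : ℕ) (hN : 1 ≤ N)
    (k : ℝ) (Φ : L →L[ℝ] L) (Λ : ℕ → V →L[ℝ] V) :
    (↥(LinearMap.range P) × (Fin N → X)) →ₗ[ℝ]
      (Module.Dual ℝ ↥(LinearMap.range P) × (Fin N → Module.Dual ℝ X)) :=
  LinearMap.prod
    (((LinearMap.range P).subtype.dualMap ∘ₗ innerₗ L) ∘ₗ
      ((LinearMap.range P).subtype ∘ₗ LinearMap.fst ℝ _ _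
        - Φ.toLinearMap ∘ₗ P ∘ₗ LinearMap.proj (⟨N - 1, by omega⟩ : Fin N)
          ∘ₗ LinearMap.snd ℝ _ _))
    (LinearMap.pi fun m =>
      k⁻¹ • ((P.dualMap ∘ₗ innerₗ L) ∘ₗ
        (P ∘ₗ LinearMap.proj m ∘ₗ LinearMap.snd ℝ _ _ - prevMap P N m))
      + (G.dualMap ∘ₗ innerₗ V) ∘ₗ ((Λ ((m : ℕ) + 1)).toLinearMap ∘ₗ G
          ∘ₗ LinearMap.proj m ∘ₗ LinearMap.snd ℝ _ _))

lemma bigMap_fst_apply (P : X →ₗ[ℝ] L) (G : X →ₗ[ℝ] V) (N : ℕ) (hN : 1 ≤ N)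
    (k : ℝ) (Φ : L →L[ℝ] L) (Λ : ℕ → V →L[ℝ] V)
    (y : ↥(LinearMap.range P) × (Fin N → X)) (v : ↥(LinearMap.range P)) :
    (bigMap P G N hN k Φ Λ y).1 v
      = ⟪(y.1 : L) - Φ (P (y.2 ⟨N - 1, by omega⟩)), (v : L)⟫ := rfl

lemma bigMap_snd_apply (P : X →ₗ[ℝ] L) (G : X →ₗ[ℝ] V) (N : ℕ) (hN : 1 ≤ N)
    (k : ℝ) (Φ : L →L[ℝ] L) (Λ : ℕ → V →L[ℝ] V)
    (y : ↥(LinearMap.range P) × (Fin N → X)) (m : Fin N) (u : X) :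
    (bigMap P G N hN k Φ Λ y).2 m u
      = k⁻¹ * ⟪P (y.2 m) - prevMap P N m y, P u⟫
        + ⟪Λ ((m : ℕ) + 1) (G (y.2 m)), G u⟫ := rfl

lemma prevMap_apply_zero (P : X →ₗ[ℝ] L) (N : ℕ) (m : Fin N) (hm : (m : ℕ) = 0)
    (y : ↥(LinearMap.range P) × (Fin N → X)) :
    prevMap P N m y = (y.1 : L) := by
  rw [prevMap, if_pos hm]; rfl

lemma prevMap_apply_pos (P : X →ₗ[ℝ] L) (N : ℕ) (m : Fin N) (hm : (m : ℕ) ≠ 0)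
    (y : ↥(LinearMap.range P) × (Fin N → X)) :
    prevMap P N m y
      = P (y.2 ⟨(m : ℕ) - 1, Nat.lt_of_le_of_lt (Nat.sub_le _ _) m.isLt⟩) := by
  rw [prevMap, if_neg hm]; rfl

end BigMap

section Inj

set_option linter.unusedSectionVars false

variable {X : Type*} [AddCommGroup X] [Module ℝ X] [FiniteDimensional ℝ X]
    {L V : Type*} [NormedAddCommGroup L] [InnerProductSpace ℝ L]
    [NormedAddCommGroup V] [InnerProductSpace ℝ V]

lemma bigMap_injective (P : X →ₗ[ℝ] L) (G : X →ₗ[ℝ] V) (hG : Function.Injective G)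
    (N : ℕ) (hN : 1 ≤ N) (k : ℝ) (hk : 0 < k) (α : ℝ) (hα : 0 < α)
    (Φ : L →L[ℝ] L) (hΦ : ‖Φ‖ ≤ 1) (Λ : ℕ → V →L[ℝ] V)
    (hΛ : ∀ m, 1 ≤ m → m ≤ N → ∀ ξ : V, α * ‖ξ‖ ^ 2 ≤ ⟪Λ m ξ, ξ⟫) :
    Function.Injective (bigMap P G N hN k Φ Λ) := by
  rw [← LinearMap.ker_eq_bot, Submodule.eq_bot_iff]
  rintro ⟨ζ, wf⟩ hy
  rw [LinearMap.mem_ker] at hy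
  obtain ⟨x0, hx0⟩ := ζ.2
  have efst : ∀ v : ↥(LinearMap.range P),
      ⟪(ζ : L) - Φ (P (wf ⟨N - 1, by omega⟩)), (v : L)⟫ = 0 := by
    intro v
    have := (bigMap_fst_apply P G N hN k Φ Λ (ζ, wf) v).symm.trans
      (DFunLike.congr_fun (congrArg Prod.fst hy) v)
    simpa using this
  have esnd : ∀ (m : Fin N) (u : X),
      k⁻¹ * ⟪P (wf m) - prevMap P N m (ζ, wf), P u⟫
        + ⟪Λ ((m : ℕ) + 1) (G (wf m)), G u⟫ = 0 := by
    intro m u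
    have := (bigMap_snd_apply P G N hN k Φ Λ (ζ, wf) m u).symm.trans
      (DFunLike.congr_fun (congrFun (congrArg Prod.snd hy) m) u)
    simpa using this
  set δ : ℕ → X := fun m => if hm : 1 ≤ m ∧ m ≤ N then wf ⟨m - 1, by omega⟩ else x0 with hδ
  have hδ0 : δ 0 = x0 := by simp [hδ]
  have hδm : ∀ m (h1m : 1 ≤ m) (hmN : m ≤ N), δ m = wf ⟨m - 1, by omega⟩ := by
    intro m h1m hmN; simp [hδ, h1m, hmN]
  have h1 : ∀ u : X, ⟪P (δ 0) - Φ (P (δ N)), P u⟫ = 0 := by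
    intro u
    rw [hδ0, hδm N hN le_rfl, hx0]
    exact efst ⟨P u, LinearMap.mem_range_self P u⟩
  have h2 : ∀ m, 1 ≤ m → m ≤ N → ∀ u : X,
      k⁻¹ * (⟪P (δ m), P u⟫ - ⟪P (δ (m - 1)), P u⟫) + ⟪Λ m (G (δ m)), G u⟫ = 0 := by
    intro m h1m hmN u
    have e := esnd ⟨m - 1, by omega⟩ u
    rw [inner_sub_left] at e
    have hm1 : (m - 1) + 1 = m := by omega
    rw [hm1] at e
    have hprev : prevMap P N (⟨m - 1, by omega⟩ : Fin N) (ζ, wf) = P (δ (m - 1)) := by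
      rcases Nat.eq_or_lt_of_le h1m with h | h
      · rw [prevMap_apply_zero P N _ (by simp [← h]), ← h]
        rw [hδ0, hx0]
      · rw [prevMap_apply_pos P N _ (by simp; omega)]
        rw [hδm (m - 1) (by omega) (by omega)]
    rw [hprev] at e
    rw [hδm m h1m hmN]
    exact e
  obtain ⟨hP0, hz⟩ := key_energy P G hG N hN k hk α hα Φ hΦ Λ hΛ δ h1 h2
  have hζ : ζ = 0 := by
    have : (ζ : L) = 0 := by rw [← hx0, ← hδ0]; exact hP0
    exact Subtype.ext this
  have hwf : wf = 0 := by
    funext i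
    have := hz ((i : ℕ) + 1) (by omega) (by omega)
    rw [hδm ((i : ℕ) + 1) (by omega) (by omega)] at this
    simpa using this
  simp [hζ, hwf]

end Inj

/-- Theorem 3.2: existence and uniqueness of the solution of the implicit Euler
gradient scheme with general time condition. -/
theorem stmt8 {X : Type*} [AddCommGroup X] [Module ℝ X] [FiniteDimensional ℝ X]
    {L V : Type*} [NormedAddCommGroup L] [InnerProductSpace ℝ L] [CompleteSpace L]
    [NormedAddCommGroup V] [InnerProductSpace ℝ V] [CompleteSpace V]
    (P : X →ₗ[ℝ] L) (G : X →ₗ[ℝ] V) (hG : Function.Injective G)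
    (N : ℕ) (hN : 1 ≤ N) (k : ℝ) (hk : 0 < k) (α : ℝ) (hα : 0 < α)
    (Φ : L →L[ℝ] L) (hΦ : ‖Φ‖ ≤ 1)
    (Λ : ℕ → V →L[ℝ] V)
    (hΛ : ∀ m, 1 ≤ m → m ≤ N → ∀ ξ : V, α * ‖ξ‖ ^ 2 ≤ ⟪Λ m ξ, ξ⟫)
    (ξ₀ : L) (f : ℕ → L) (F : ℕ → V) :
    ∃ w : ℕ → X,
      (∀ u : X, ⟪P (w 0) - Φ (P (w N)), P u⟫ = ⟪ξ₀, P u⟫) ∧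
      (∀ m, 1 ≤ m → m ≤ N → ∀ u : X,
        ⟪P (k⁻¹ • (w m - w (m - 1))), P u⟫ + ⟪Λ m (G (w m)), G u⟫ =
          ⟪f m, P u⟫ - ⟪F m, G u⟫) ∧
      ∀ w' : ℕ → X,
        (∀ u : X, ⟪P (w' 0) - Φ (P (w' N)), P u⟫ = ⟪ξ₀, P u⟫) →
        (∀ m, 1 ≤ m → m ≤ N → ∀ u : X,
          ⟪P (k⁻¹ • (w' m - w' (m - 1))), P u⟫ + ⟪Λ m (G (w' m)), G u⟫ =
            ⟪f m, P u⟫ - ⟪F m, G u⟫) →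
        P (w' 0) = P (w 0) ∧ ∀ m, 1 ≤ m → m ≤ N → w' m = w m := by
  classical
  -- uniqueness helper
  have huniq : ∀ w w'' : ℕ → X,
      (∀ u : X, ⟪P (w 0) - Φ (P (w N)), P u⟫ = ⟪ξ₀, P u⟫) →
      (∀ m, 1 ≤ m → m ≤ N → ∀ u : X,
        ⟪P (k⁻¹ • (w m - w (m - 1))), P u⟫ + ⟪Λ m (G (w m)), G u⟫ =
          ⟪f m, P u⟫ - ⟪F m, G u⟫) →
      (∀ u : X, ⟪P (w'' 0) - Φ (P (w'' N)), P u⟫ = ⟪ξ₀, P u⟫) →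
      (∀ m, 1 ≤ m → m ≤ N → ∀ u : X,
        ⟪P (k⁻¹ • (w'' m - w'' (m - 1))), P u⟫ + ⟪Λ m (G (w'' m)), G u⟫ =
          ⟪f m, P u⟫ - ⟪F m, G u⟫) →
      P (w'' 0) = P (w 0) ∧ ∀ m, 1 ≤ m → m ≤ N → w'' m = w m := by
    intro w w'' hA hB hA'' hB''
    have hh1 : ∀ u : X,
        ⟪P ((fun m => w'' m - w m) 0) - Φ (P ((fun m => w'' m - w m) N)), P u⟫ = 0 := by
      intro u
      have a := hA u
      have a'' := hA'' u
      simp only [map_sub, inner_sub_left] at a a'' ⊢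
      linear_combination a'' - a
    have hh2 : ∀ m, 1 ≤ m → m ≤ N → ∀ u : X,
        k⁻¹ * (⟪P ((fun m => w'' m - w m) m), P u⟫
          - ⟪P ((fun m => w'' m - w m) (m - 1)), P u⟫)
          + ⟪Λ m (G ((fun m => w'' m - w m) m)), G u⟫ = 0 := by
      intro m h1m hmN u
      have b := hB m h1m hmN u
      have b'' := hB'' m h1m hmN u
      simp only [map_sub, map_smul, inner_sub_left, real_inner_smul_left] at b b'' ⊢
      linear_combination b'' - b
    obtain ⟨hP0, hz⟩ := key_energy P G hG N hN k hk α hα Φ hΦ Λ hΛ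
      (fun m => w'' m - w m) hh1 hh2
    refine ⟨?_, fun m h1m hmN => ?_⟩
    · have h := hP0
      simp only [map_sub] at h
      exact sub_eq_zero.mp h
    · exact sub_eq_zero.mp (hz m h1m hmN)
  -- existence
  have hrank : Module.finrank ℝ (↥(LinearMap.range P) × (Fin N → X))
      = Module.finrank ℝ
        (Module.Dual ℝ ↥(LinearMap.range P) × (Fin N → Module.Dual ℝ X)) := by
    rw [Module.finrank_prod, Module.finrank_prod,
      Module.finrank_pi_fintype, Module.finrank_pi_fintype,
      Subspace.dual_finrank_eq]
    simp [Subspace.dual_finrank_eq]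
  have hsurj := (LinearMap.injective_iff_surjective_of_finrank_eq_finrank hrank).mp
    (bigMap_injective P G hG N hN k hk α hα Φ hΦ Λ hΛ)
  obtain ⟨⟨ζ, wf⟩, hy⟩ := hsurj
    (((LinearMap.range P).subtype.dualMap ∘ₗ innerₗ L) ξ₀,
     fun m => (P.dualMap ∘ₗ innerₗ L) (f ((m : ℕ) + 1))
       - (G.dualMap ∘ₗ innerₗ V) (F ((m : ℕ) + 1)))
  obtain ⟨x0, hx0⟩ := ζ.2
  have efst : ∀ v : ↥(LinearMap.range P),
      ⟪(ζ : L) - Φ (P (wf ⟨N - 1, by omega⟩)), (v : L)⟫ = ⟪ξ₀, (v : L)⟫ := by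
    intro v
    have := (bigMap_fst_apply P G N hN k Φ Λ (ζ, wf) v).symm.trans
      (DFunLike.congr_fun (congrArg Prod.fst hy) v)
    simpa using this
  have esnd : ∀ (m : Fin N) (u : X),
      k⁻¹ * ⟪P (wf m) - prevMap P N m (ζ, wf), P u⟫
        + ⟪Λ ((m : ℕ) + 1) (G (wf m)), G u⟫
      = ⟪f ((m : ℕ) + 1), P u⟫ - ⟪F ((m : ℕ) + 1), G u⟫ := by
    intro m u
    have := (bigMap_snd_apply P G N hN k Φ Λ (ζ, wf) m u).symm.trans
      (DFunLike.congr_fun (congrFun (congrArg Prod.snd hy) m) u)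
    simpa using this
  set w : ℕ → X := fun m => if hm : 1 ≤ m ∧ m ≤ N then wf ⟨m - 1, by omega⟩ else x0
    with hw
  have hw0 : w 0 = x0 := by simp [hw]
  have hwm : ∀ m (h1m : 1 ≤ m) (hmN : m ≤ N), w m = wf ⟨m - 1, by omega⟩ := by
    intro m h1m hmN; simp [hw, h1m, hmN]
  have hw1 : ∀ u : X, ⟪P (w 0) - Φ (P (w N)), P u⟫ = ⟪ξ₀, P u⟫ := by
    intro u
    rw [hw0, hwm N hN le_rfl, hx0]
    exact efst ⟨P u, LinearMap.mem_range_self P u⟩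
  have hw2 : ∀ m, 1 ≤ m → m ≤ N → ∀ u : X,
      ⟪P (k⁻¹ • (w m - w (m - 1))), P u⟫ + ⟪Λ m (G (w m)), G u⟫ =
        ⟪f m, P u⟫ - ⟪F m, G u⟫ := by
    intro m h1m hmN u
    have e := esnd ⟨m - 1, by omega⟩ u
    have hm1 : (m - 1) + 1 = m := by omega
    rw [hm1] at e
    have hprev : prevMap P N (⟨m - 1, by omega⟩ : Fin N) (ζ, wf) = P (w (m - 1)) := by
      rcases Nat.eq_or_lt_of_le h1m with h | h
      · rw [prevMap_apply_zero P N _ (by simp [← h]), ← h, hw0, hx0]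
      · rw [prevMap_apply_pos P N _ (by simp; omega),
          hwm (m - 1) (by omega) (by omega)]
    rw [hprev] at e
    have hgoal : ⟪P (k⁻¹ • (w m - w (m - 1))), P u⟫
        = k⁻¹ * ⟪P (w m) - P (w (m - 1)), P u⟫ := by
      simp [map_smul, map_sub, real_inner_smul_left]
    rw [hgoal, hwm m h1m hmN]
    exact e
  exact ⟨w, hw1, hw2, fun w' h1' h2' => huniq w w' hw1 hw2 h1' h2'⟩
end

section
/- Let V be a real Hilbert space, M ≥ 1, α > 0, and let A : V → V be a continuous linear operator with ‖A v‖ ≤ M‖v‖ and ⟨A v, v⟩ ≥ α‖v‖² for all v ∈ V. Let A_s := (A + A*)/2 and A_a := (A − A*)/2, where A* is the adjoint of A. If B : V → V is a continuous self-adjoint linear operator with B ∘ B = A_s, then √α ‖v‖ ≤ ‖B v‖ ≤ √M ‖v‖ for all v ∈ V; if moreover B is bijective, then ‖B⁻¹(A_a v)‖ ≤ (M/√α) ‖v‖ for all v ∈ V. -/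
open scoped RealInnerProductSpace

/-- Estimates (4.9), (4.10) and the bound `‖A_s^{-1/2} A_a v‖ ≤ (M/√α)‖v‖` from the
proof of Lemma 4.3: if `B` is a self-adjoint square root of the symmetric part
`A_s = (A + A*)/2` of an `M`-continuous `α`-coercive operator `A`, then
`√α‖v‖ ≤ ‖B v‖ ≤ √M‖v‖`, and if `B` is bijective then `‖B⁻¹(A_a v)‖ ≤ (M/√α)‖v‖`
where `A_a = (A − A*)/2`. -/
theorem stmt10 {V : Type*} [NormedAddCommGroup V] [InnerProductSpace ℝ V] [CompleteSpace V]
    (M α : ℝ) (hM : 1 ≤ M) (hα : 0 < α) (A : V →L[ℝ] V)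
    (hAM : ∀ v : V, ‖A v‖ ≤ M * ‖v‖) (hAα : ∀ v : V, α * ‖v‖ ^ 2 ≤ ⟪A v, v⟫)
    (B : V →L[ℝ] V) (hB : IsSelfAdjoint B)
    (hBB : B ∘L B = (2⁻¹ : ℝ) • (A + ContinuousLinearMap.adjoint A)) :
    (∀ v : V, Real.sqrt α * ‖v‖ ≤ ‖B v‖ ∧ ‖B v‖ ≤ Real.sqrt M * ‖v‖) ∧
    (Function.Bijective B → ∀ v w : V,
      B w = ((2⁻¹ : ℝ) • (A - ContinuousLinearMap.adjoint A)) v →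
      ‖w‖ ≤ M / Real.sqrt α * ‖v‖) := by
  have hBadj : ContinuousLinearMap.adjoint B = B :=
    ContinuousLinearMap.isSelfAdjoint_iff'.mp hB
  have key : ∀ v : V, ‖B v‖ ^ 2 = ⟪A v, v⟫ := by
    intro v
    have h1 : ⟪B v, B v⟫ = ⟪B (B v), v⟫ := by
      rw [← ContinuousLinearMap.adjoint_inner_right, hBadj]
      exact real_inner_comm _ _
    have h2 : (B ∘L B) v = ((2⁻¹ : ℝ) • (A + ContinuousLinearMap.adjoint A)) v := by
      rw [hBB]
    simp only [ContinuousLinearMap.comp_apply] at h2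
    rw [← real_inner_self_eq_norm_sq, h1, h2]
    simp only [ContinuousLinearMap.smul_apply, ContinuousLinearMap.add_apply,
      real_inner_smul_left, inner_add_left]
    have h3 : ⟪ContinuousLinearMap.adjoint A v, v⟫ = ⟪A v, v⟫ := by
      rw [ContinuousLinearMap.adjoint_inner_left, real_inner_comm]
    rw [h3]; ring
  have hAnorm : ‖A‖ ≤ M := by
    apply ContinuousLinearMap.opNorm_le_bound _ (le_trans zero_le_one hM)
    exact hAM
  have hAadjnorm : ∀ v : V, ‖ContinuousLinearMap.adjoint A v‖ ≤ M * ‖v‖ := by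
    intro v
    calc ‖ContinuousLinearMap.adjoint A v‖ ≤ ‖ContinuousLinearMap.adjoint A‖ * ‖v‖ :=
          ContinuousLinearMap.le_opNorm _ _
      _ ≤ M * ‖v‖ := by
          rw [LinearIsometryEquiv.norm_map ContinuousLinearMap.adjoint A]
          exact mul_le_mul_of_nonneg_right hAnorm (norm_nonneg v)
  have lower : ∀ v : V, Real.sqrt α * ‖v‖ ≤ ‖B v‖ := by
    intro v
    have h : α * ‖v‖ ^ 2 ≤ ‖B v‖ ^ 2 := (key v) ▸ hAα v
    have := Real.sqrt_le_sqrt h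
    rwa [Real.sqrt_mul hα.le, Real.sqrt_sq (norm_nonneg v),
      Real.sqrt_sq (norm_nonneg _)] at this
  refine ⟨fun v => ⟨lower v, ?_⟩, ?_⟩
  · have h : ‖B v‖ ^ 2 ≤ M * ‖v‖ ^ 2 := by
      rw [key v]
      calc ⟪A v, v⟫ ≤ ‖A v‖ * ‖v‖ := real_inner_le_norm _ _
        _ ≤ M * ‖v‖ * ‖v‖ := mul_le_mul_of_nonneg_right (hAM v) (norm_nonneg v)
        _ = M * ‖v‖ ^ 2 := by ring
    have := Real.sqrt_le_sqrt h
    rwa [Real.sqrt_mul (le_trans zero_le_one hM), Real.sqrt_sq (norm_nonneg v),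
      Real.sqrt_sq (norm_nonneg _)] at this
  · intro _ v w hw
    have hBw : ‖B w‖ ≤ M * ‖v‖ := by
      rw [hw]
      simp only [ContinuousLinearMap.smul_apply, ContinuousLinearMap.sub_apply]
      calc ‖(2⁻¹ : ℝ) • (A v - ContinuousLinearMap.adjoint A v)‖
          = 2⁻¹ * ‖A v - ContinuousLinearMap.adjoint A v‖ := by
            rw [norm_smul]; norm_num
        _ ≤ 2⁻¹ * (‖A v‖ + ‖ContinuousLinearMap.adjoint A v‖) := by
            have := norm_sub_le (A v) (ContinuousLinearMap.adjoint A v)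
            linarith
        _ ≤ 2⁻¹ * (M * ‖v‖ + M * ‖v‖) := by
            have := hAM v; have := hAadjnorm v; linarith
        _ = M * ‖v‖ := by ring
    have hsα : 0 < Real.sqrt α := Real.sqrt_pos.mpr hα
    have h1 : Real.sqrt α * ‖w‖ ≤ M * ‖v‖ := le_trans (lower w) hBw
    rw [div_mul_eq_mul_div, le_div_iff₀ hsα]
    linarith
end

section
/- Let X be a finite-dimensional real vector space, L and V real Hilbert spaces, P : X → L and G : X → V linear maps, and let C_P > 0 and Ĉ ≥ 0 be constants such that ‖P v‖_L ≤ Ĉ ‖G v‖_V for all v ∈ X. Let u ∈ L and ĝ ∈ V satisfy ‖u‖_L ≤ C_P ‖ĝ‖_V, and suppose w ∈ X satisfies ⟨P w, P v⟩_L + ⟨G w, G v⟩_V = ⟨u, P v⟩_L + ⟨ĝ, G v⟩_V for all v ∈ X. Then ‖G w‖_V ≤ (C_P Ĉ + 1) ‖ĝ‖_V. -/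
open scoped RealInnerProductSpace

/-- The projection inequality (5.6): if `w ∈ X` is the interpolate of `(u, g)`,
i.e. `⟨Pw, Pv⟩ + ⟨Gw, Gv⟩ = ⟨u, Pv⟩ + ⟨g, Gv⟩` for all `v`, with `‖Pv‖ ≤ Ĉ‖Gv‖`
and `‖u‖ ≤ C_P‖g‖`, then `‖Gw‖ ≤ (C_P Ĉ + 1)‖g‖`. -/
theorem stmt11 {X : Type*} [AddCommGroup X] [Module ℝ X] [FiniteDimensional ℝ X]
    {L V : Type*} [NormedAddCommGroup L] [InnerProductSpace ℝ L] [CompleteSpace L]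
    [NormedAddCommGroup V] [InnerProductSpace ℝ V] [CompleteSpace V]
    (P : X →ₗ[ℝ] L) (G : X →ₗ[ℝ] V)
    (CP Chat : ℝ) (hCP : 0 < CP) (hChat : 0 ≤ Chat)
    (hPC : ∀ v : X, ‖P v‖ ≤ Chat * ‖G v‖)
    (u : L) (g : V) (hug : ‖u‖ ≤ CP * ‖g‖)
    (w : X) (hw : ∀ v : X, ⟪P w, P v⟫ + ⟪G w, G v⟫ = ⟪u, P v⟫ + ⟪g, G v⟫) :
    ‖G w‖ ≤ (CP * Chat + 1) * ‖g‖ := by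
  have hg : 0 ≤ ‖g‖ := norm_nonneg _
  rcases eq_or_ne (G w) 0 with h0 | h0
  · rw [h0, norm_zero]
    positivity
  have hGw : 0 < ‖G w‖ := norm_pos_iff.mpr h0
  have key : ‖G w‖ ^ 2 ≤ (CP * Chat + 1) * ‖g‖ * ‖G w‖ := by
    have h := hw w
    have h1 : ‖G w‖ ^ 2 ≤ ⟪u, P w⟫ + ⟪g, G w⟫ := by
      have := real_inner_self_nonneg (x := P w)
      nlinarith [real_inner_self_eq_norm_sq (G w)]
    have h2 : ⟪u, P w⟫ ≤ ‖u‖ * ‖P w‖ := real_inner_le_norm _ _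
    have h3 : ⟪g, G w⟫ ≤ ‖g‖ * ‖G w‖ := real_inner_le_norm _ _
    have h4 := hPC w
    have h5 : ‖u‖ * ‖P w‖ ≤ (CP * ‖g‖) * (Chat * ‖G w‖) := by
      apply mul_le_mul hug h4 (norm_nonneg _)
      positivity
    nlinarith
  nlinarith
end

section
/- Let X be a finite-dimensional real vector space, L and V real Hilbert spaces, P : X → L and G : X → V linear maps, and S : V → V a continuous self-adjoint linear operator with ⟨S ξ, ξ⟩ ≥ 0 for all ξ ∈ V. Let Ĉ ≥ 0 satisfy ‖P z‖²_L ≤ Ĉ² ⟨S G z, G z⟩ for all z ∈ X. Let u ∈ L and w ∈ X, and suppose v₁, r ∈ X satisfy ⟨S G v₁, G z⟩_V = ⟨u, P z⟩_L and ⟨S G r, G z⟩_V = ⟨P w, P z⟩_L for all z ∈ X. Then ⟨S G(v₁ − r), G(v₁ − r)⟩ ≤ Ĉ² ‖u − P w‖²_L. -/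
open scoped RealInnerProductSpace

/-- The comparison estimate from the proof of Lemma 5.4: if `v₁` and `r` are the
discrete Riesz representatives of `u ∈ L` and of `P w`, then
`⟨S G(v₁ − r), G(v₁ − r)⟩ ≤ Ĉ² ‖u − P w‖²`. -/
theorem stmt12 {X : Type*} [AddCommGroup X] [Module ℝ X] [FiniteDimensional ℝ X]
    {L V : Type*} [NormedAddCommGroup L] [InnerProductSpace ℝ L] [CompleteSpace L]
    [NormedAddCommGroup V] [InnerProductSpace ℝ V] [CompleteSpace V]
    (P : X →ₗ[ℝ] L) (G : X →ₗ[ℝ] V) (S : V →L[ℝ] V) (hS : IsSelfAdjoint S)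
    (hSpos : ∀ ξ : V, 0 ≤ ⟪S ξ, ξ⟫)
    (Chat : ℝ) (hChat : 0 ≤ Chat)
    (hP : ∀ z : X, ‖P z‖ ^ 2 ≤ Chat ^ 2 * ⟪S (G z), G z⟫)
    (u : L) (w : X) (v₁ r : X)
    (hv₁ : ∀ z : X, ⟪S (G v₁), G z⟫ = ⟪u, P z⟫)
    (hr : ∀ z : X, ⟪S (G r), G z⟫ = ⟪P w, P z⟫) :
    ⟪S (G (v₁ - r)), G (v₁ - r)⟫ ≤ Chat ^ 2 * ‖u - P w‖ ^ 2 := by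
  set e := v₁ - r with he
  have ht : ⟪S (G e), G e⟫ = ⟪u - P w, P e⟫ := by
    have : S (G e) = S (G v₁) - S (G r) := by
      rw [he, map_sub, map_sub]
    rw [this, inner_sub_left, hv₁ e, hr e, inner_sub_left]
  have t0 : (0:ℝ) ≤ ⟪S (G e), G e⟫ := hSpos _
  have h1 : ⟪S (G e), G e⟫ ≤ ‖u - P w‖ * ‖P e‖ := by
    rw [ht]; exact real_inner_le_norm _ _
  have h2 := hP e
  have ha : (0:ℝ) ≤ ‖u - P w‖ := norm_nonneg _
  have hb : (0:ℝ) ≤ ‖P e‖ := norm_nonneg _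
  rcases eq_or_lt_of_le t0 with h | h
  · rw [← h]
    positivity
  · have hsq : ⟪S (G e), G e⟫ ^ 2 ≤ (‖u - P w‖ * ‖P e‖) ^ 2 :=
      pow_le_pow_left₀ t0 h1 2
    nlinarith [mul_le_mul_of_nonneg_left h2 (sq_nonneg ‖u - P w‖)]
end
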